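/- arXiv:1805.10159 — 10 statements merged into one kernel-verified Lean document; each statement's English description precedes it below -/
import Mathlib

section
/- Every positive Boolean function f on {0,1}^n with k ≥ 0 relevant variables has at least k+1 extremal points (minimal ones plus maximal zeros). -/
/-- `f` is positive (monotone): componentwise `x ≤ y` and `f x = 1` imply `f y = 1`. -/
def Positive {n : ℕ} (f : (Fin n → Bool) → Bool) : Prop :=
  ∀ x y : Fin n → Bool, x ≤ y → f x = true → f y = true

/-- `y` is a minimal true point of `f`. -/
def MinOne {n : ℕ} (f : (Fin n → Bool) → Bool) (y : Fin n → Bool) : Prop :=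
  f y = true ∧ ∀ z : Fin n → Bool, z ≤ y → z ≠ y → f z = false

/-- `y` is a maximal false point of `f`. -/
def MaxZero {n : ℕ} (f : (Fin n → Bool) → Bool) (y : Fin n → Bool) : Prop :=
  f y = false ∧ ∀ z : Fin n → Bool, y ≤ z → z ≠ y → f z = true

/-- Variable `i` is relevant for `f`. -/
def Relevant {n : ℕ} (f : (Fin n → Bool) → Bool) (i : Fin n) : Prop :=
  ∃ x : Fin n → Bool, f (Function.update x i false) ≠ f (Function.update x i true)

namespace ExtremalAux

variable {n : ℕ}

/-- restriction of `g` fixing coordinate `j` to `b`. -/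
def res (g : (Fin n → Bool) → Bool) (j : Fin n) (b : Bool) : (Fin n → Bool) → Bool :=
  fun x => g (Function.update x j b)

lemma update_le_update {x y : Fin n → Bool} (j : Fin n) (b : Bool) (h : x ≤ y) :
    Function.update x j b ≤ Function.update y j b := by
  intro i
  rcases eq_or_ne i j with rfl | hij
  · simp
  · simpa [Function.update_apply, hij] using h i

lemma update_false_le (x : Fin n → Bool) (j : Fin n) : Function.update x j false ≤ x := by
  intro i
  rcases eq_or_ne i j with rfl | hij
  · simp [Bool.false_le]
  · simp [Function.update_apply, hij, le_refl]

lemma le_update_true (x : Fin n → Bool) (j : Fin n) : x ≤ Function.update x j true := by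
  intro i
  rcases eq_or_ne i j with rfl | hij
  · simp [Bool.le_true]
  · simp [Function.update_apply, hij, le_refl]

lemma res_positive {g : (Fin n → Bool) → Bool} (hg : Positive g) (j : Fin n) (b : Bool) :
    Positive (res g j b) := by
  intro x y hxy hx
  exact hg _ _ (update_le_update j b hxy) hx

lemma res_le {g : (Fin n → Bool) → Bool} (hg : Positive g) (j : Fin n) (x : Fin n → Bool)
    (h0 : res g j false x = true) : res g j true x = true :=
  hg _ _ (by
    intro i
    rcases eq_or_ne i j with rfl | hij
    · simp [Bool.le_true]
    · simp [Function.update_apply, hij, le_refl]) h0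

lemma res_update (g : (Fin n → Bool) → Bool) (j : Fin n) (b c : Bool) (x : Fin n → Bool) :
    res g j b (Function.update x j c) = res g j b x := by
  simp [res, Function.update_idem]

lemma not_relevant_res (g : (Fin n → Bool) → Bool) (j : Fin n) (b : Bool) :
    ¬ Relevant (res g j b) j := by
  rintro ⟨x, hx⟩
  exact hx (by rw [res_update, res_update])

/-- if `u` does not depend on `j`, evaluation ignores updates at `j`. -/
lemma indep_eval {u : (Fin n → Bool) → Bool} {j : Fin n} (hu : ¬ Relevant u j)
    (x : Fin n → Bool) (b : Bool) : u (Function.update x j b) = u x := by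
  have hall : ∀ y, u (Function.update y j false) = u (Function.update y j true) := by
    intro y
    by_contra hne
    exact hu ⟨y, hne⟩
  have hself : u (Function.update x j (x j)) = u x := by rw [Function.update_eq_self]
  cases b with
  | false =>
    cases hxj : x j with
    | false => rw [← hself, hxj]
    | true => rw [hall x, ← hself, hxj]
  | true =>
    cases hxj : x j with
    | false => rw [← hall x, ← hself, hxj]
    | true => rw [← hself, hxj]

lemma relevant_of_res {g : (Fin n → Bool) → Bool} {j : Fin n} {b : Bool} {i : Fin n}
    (h : Relevant (res g j b) i) : i ≠ j ∧ Relevant g i := by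
  have hij : i ≠ j := by
    rintro rfl
    exact not_relevant_res g i b h
  obtain ⟨x, hx⟩ := h
  refine ⟨hij, ⟨Function.update x j b, ?_⟩⟩
  intro he
  apply hx
  show g (Function.update (Function.update x i false) j b)
      = g (Function.update (Function.update x i true) j b)
  rw [Function.update_comm hij (false) b x, Function.update_comm hij (true) b x]
  exact he

lemma relevant_res_or {g : (Fin n → Bool) → Bool} {j i : Fin n} (hij : i ≠ j)
    (h : Relevant g i) : Relevant (res g j false) i ∨ Relevant (res g j true) i := by
  obtain ⟨x, hx⟩ := h
  have key : ∀ c : Bool, res g j (x j) (Function.update x i c) = g (Function.update x i c) := by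
    intro c
    show g (Function.update (Function.update x i c) j ((x) j)) = _
    have : (Function.update x i c) j = x j := by
      simp [Function.update_apply, hij.symm]
    rw [← this, Function.update_eq_self]
  cases hxj : x j with
  | false =>
    left; exact ⟨x, by rw [hxj] at key; rw [key, key]; exact hx⟩
  | true =>
    right; exact ⟨x, by rw [hxj] at key; rw [key, key]; exact hx⟩

lemma minone_coord {u : (Fin n → Bool) → Bool} {j : Fin n} (hu : ¬ Relevant u j)
    {p : Fin n → Bool} (hp : MinOne u p) : p j = false := by
  by_contra htrue
  have hpj : p j = true := by simpa using htrue
  have hle : Function.update p j false ≤ p := update_false_le p j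
  have hne : Function.update p j false ≠ p := by
    intro he
    have := congrFun he j
    simp [hpj] at this
  have hfalse := hp.2 _ hle hne
  rw [indep_eval hu p false, hp.1] at hfalse
  exact absurd hfalse (by simp)

lemma maxzero_coord {u : (Fin n → Bool) → Bool} {j : Fin n} (hu : ¬ Relevant u j)
    {q : Fin n → Bool} (hq : MaxZero u q) : q j = true := by
  by_contra hfalse
  have hqj : q j = false := by simpa using hfalse
  have hle : q ≤ Function.update q j true := le_update_true q j
  have hne : Function.update q j true ≠ q := by
    intro he
    have := congrFun he j
    simp [hqj] at this
  have htrue := hq.2 _ hle hne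
  rw [indep_eval hu q true, hq.1] at htrue
  exact absurd htrue (by simp)

lemma eq_update_false {p : Fin n → Bool} {j : Fin n} (h : p j = false) :
    Function.update p j false = p := by
  rw [← h, Function.update_eq_self]

lemma eq_update_true {p : Fin n → Bool} {j : Fin n} (h : p j = true) :
    Function.update p j true = p := by
  rw [← h, Function.update_eq_self]

lemma minone_res_false_subset {g : (Fin n → Bool) → Bool} {j : Fin n}
    {p : Fin n → Bool} (hp : MinOne (res g j false) p) : MinOne g p := by
  have hpj : p j = false := minone_coord (not_relevant_res g j false) hp
  constructor
  · have : res g j false p = true := hp.1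
    rwa [res, eq_update_false hpj] at this
  · intro z hz hzne
    have hzj : z j = false := by
      have := hz j
      rw [hpj] at this
      exact le_antisymm this (Bool.false_le _)
    have := hp.2 z hz hzne
    rwa [res, eq_update_false hzj] at this

lemma minone_lift {g : (Fin n → Bool) → Bool} (hg : Positive g) {j : Fin n}
    {p : Fin n → Bool} (hp : MinOne (res g j true) p) (h0 : res g j false p = false) :
    MinOne g (Function.update p j true) := by
  have hpj : p j = false := minone_coord (not_relevant_res g j true) hp
  constructor
  · exact hp.1
  · intro z hz hzne
    cases hzj : z j with
    | true =>
      set z' := Function.update z j false with hz'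
      have hz'le : z' ≤ p := by
        intro i
        rcases eq_or_ne i j with rfl | hij
        · simp [hz', Bool.false_le]
        · have := hz i
          simp only [Function.update_apply, hij] at this ⊢
          simpa [hz', Function.update_apply, hij] using this
      have hz'ne : z' ≠ p := by
        intro he
        apply hzne
        have : Function.update z' j true = Function.update p j true := by rw [he]
        rwa [hz', Function.update_idem, eq_update_true hzj] at this
      have := hp.2 z' hz'le hz'ne
      show g z = false
      have hgz : g z = res g j true z' := by
        rw [res, hz', Function.update_idem, eq_update_true hzj]
      rw [hgz]
      exact this
    | false =>
      have hzle : z ≤ p := by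
        intro i
        rcases eq_or_ne i j with rfl | hij
        · rw [hzj, hpj]
        · have := hz i
          simpa [Function.update_apply, hij] using this
      by_contra hne
      have hgz : g z = true := by simpa using hne
      have : res g j false p = true := by
        apply res_positive hg j false z p hzle
        rwa [res, eq_update_false hzj]
      rw [h0] at this
      exact absurd this (by simp)

lemma maxzero_res_true_subset {g : (Fin n → Bool) → Bool} {j : Fin n}
    {q : Fin n → Bool} (hq : MaxZero (res g j true) q) : MaxZero g q := by
  have hqj : q j = true := maxzero_coord (not_relevant_res g j true) hq
  constructor
  · have : res g j true q = false := hq.1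
    rwa [res, eq_update_true hqj] at this
  · intro z hz hzne
    have hzj : z j = true := by
      have := hz j
      rw [hqj] at this
      exact le_antisymm (Bool.le_true _) this
    have := hq.2 z hz hzne
    rwa [res, eq_update_true hzj] at this

lemma maxzero_lift {g : (Fin n → Bool) → Bool} (hg : Positive g) {j : Fin n}
    {q : Fin n → Bool} (hq : MaxZero (res g j false) q) (h1 : res g j true q = true) :
    MaxZero g (Function.update q j false) := by
  have hqj : q j = true := maxzero_coord (not_relevant_res g j false) hq
  constructor
  · exact hq.1
  · intro z hz hzne
    cases hzj : z j with
    | false =>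
      set z' := Function.update z j true with hz'
      have hz'ge : q ≤ z' := by
        intro i
        rcases eq_or_ne i j with rfl | hij
        · simp [hz', hqj]
        · have := hz i
          simp only [Function.update_apply, hij] at this ⊢
          simpa [hz', Function.update_apply, hij] using this
      have hz'ne : z' ≠ q := by
        intro he
        apply hzne
        have : Function.update z' j false = Function.update q j false := by rw [he]
        rwa [hz', Function.update_idem, eq_update_false hzj] at this
      have := hq.2 z' hz'ge hz'ne
      show g z = true
      have hgz : g z = res g j false z' := by
        rw [res, hz', Function.update_idem, eq_update_false hzj]
      rw [hgz]
      exact this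
    | true =>
      have hzge : q ≤ z := by
        intro i
        rcases eq_or_ne i j with rfl | hij
        · rw [hzj, hqj]
        · have := hz i
          simpa [Function.update_apply, hij] using this
      have : res g j true z = true := res_positive hg j true q z hzge h1
      rwa [res, eq_update_true hzj] at this

lemma maxzero_pass {g : (Fin n → Bool) → Bool} (hg : Positive g) {j : Fin n}
    {q : Fin n → Bool} (hq : MaxZero (res g j false) q) (h1 : res g j true q = false) :
    MaxZero (res g j true) q := by
  refine ⟨h1, fun z hz hzne => ?_⟩
  exact res_le hg j z (hq.2 z hz hzne)

lemma minone_pass {g : (Fin n → Bool) → Bool} (hg : Positive g) {j : Fin n}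
    {p : Fin n → Bool} (hp : MinOne (res g j true) p) (h0 : res g j false p = true) :
    MinOne (res g j false) p := by
  refine ⟨h0, fun z hz hzne => ?_⟩
  have := hp.2 z hz hzne
  by_contra hne
  have hzt : res g j false z = true := by simpa using hne
  rw [res_le hg j z hzt] at this
  exact absurd this (by simp)

lemma exists_maxzero_above {g : (Fin n → Bool) → Bool} {x : Fin n → Bool}
    (hx : g x = false) : ∃ q, x ≤ q ∧ MaxZero g q := by
  classical
  set s : Set (Fin n → Bool) := {z | x ≤ z ∧ g z = false} with hs
  obtain ⟨q, hqs, hqmax⟩ := Set.Finite.exists_maximalFor id s (Set.toFinite s)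
    ⟨x, le_refl x, hx⟩
  refine ⟨q, hqs.1, hqs.2, fun z hqz hzne => ?_⟩
  by_contra hne
  have hgz : g z = false := by simpa using hne
  have hzs : z ∈ s := ⟨le_trans hqs.1 hqz, hgz⟩
  exact hzne (le_antisymm (hqmax hzs hqz) hqz)

lemma exists_minone_below {g : (Fin n → Bool) → Bool} {x : Fin n → Bool}
    (hx : g x = true) : ∃ p, p ≤ x ∧ MinOne g p := by
  classical
  set s : Set (Fin n → Bool) := {z | z ≤ x ∧ g z = true} with hs
  obtain ⟨p, hps, hpmin⟩ := Set.Finite.exists_minimalFor id s (Set.toFinite s)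
    ⟨x, le_refl x, hx⟩
  refine ⟨p, hps.1, hps.2, fun z hzp hzne => ?_⟩
  by_contra hne
  have hgz : g z = true := by simpa using hne
  have hzs : z ∈ s := ⟨le_trans hzp hps.1, hgz⟩
  exact hzne (le_antisymm hzp (hpmin hzs hzp))

lemma not_relevant_and {u v : (Fin n → Bool) → Bool} {i : Fin n}
    (hu : ¬ Relevant u i) (hv : ¬ Relevant v i) :
    ¬ Relevant (fun x => u x && v x) i := by
  rintro ⟨x, hx⟩
  apply hx
  show (u (Function.update x i false) && v (Function.update x i false))
      = (u (Function.update x i true) && v (Function.update x i true))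
  rw [indep_eval hu, indep_eval hu, indep_eval hv, indep_eval hv]

section Counting
variable {α : Type*} [Finite α]

lemma two_disjoint_le {A B C : Set α} (hA : A ⊆ C) (hB : B ⊆ C) (hAB : Disjoint A B) :
    A.ncard + B.ncard ≤ C.ncard := by
  rw [← Set.ncard_union_eq hAB (Set.toFinite A) (Set.toFinite B)]
  exact Set.ncard_le_ncard (Set.union_subset hA hB) (Set.toFinite C)

lemma three_disjoint_le {A B C D : Set α} (hA : A ⊆ D) (hB : B ⊆ D) (hC : C ⊆ D)
    (hAB : Disjoint A B) (hAC : Disjoint A C) (hBC : Disjoint B C) :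
    A.ncard + B.ncard + C.ncard ≤ D.ncard := by
  have h1 : (A ∪ B).ncard = A.ncard + B.ncard :=
    Set.ncard_union_eq hAB (Set.toFinite A) (Set.toFinite B)
  have := two_disjoint_le (Set.union_subset hA hB) hC (Set.disjoint_union_left.mpr ⟨hAC, hBC⟩)
  omega

lemma partition_ncard (S : Set α) (P : α → Prop) :
    {x | x ∈ S ∧ P x}.ncard + {x | x ∈ S ∧ ¬ P x}.ncard = S.ncard := by
  classical
  rw [← Set.ncard_union_eq]
  · congr 1
    ext x
    by_cases hx : P x <;> simp [hx]
  · rw [Set.disjoint_left]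
    rintro a ⟨_, ha⟩ ⟨_, hna⟩
    exact hna ha

end Counting

lemma update_inj_of_coord {p q : Fin n → Bool} {j : Fin n} {b c : Bool}
    (hp : p j = c) (hq : q j = c) (he : Function.update p j b = Function.update q j b) :
    p = q := by
  funext i
  rcases eq_or_ne i j with rfl | hij
  · rw [hp, hq]
  · have := congrFun he i
    simpa [Function.update_apply, hij] using this

lemma minone_gh {g1 h : (Fin n → Bool) → Bool} (hg1h : ∀ x, g1 x = true → h x = true)
    {p : Fin n → Bool} (hp : MinOne g1 p) : MinOne (fun x => g1 x && h x) p := by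
  refine ⟨?_, ?_⟩
  · show (g1 p && h p) = true
    rw [hp.1, hg1h p hp.1]
    rfl
  · intro z hz hzne
    show (g1 z && h z) = false
    rw [hp.2 z hz hzne]
    rfl

lemma minone_gh' {g1 h : (Fin n → Bool) → Bool} (hg1 : ∀ x, g1 x = true → h x = true)
    {p : Fin n → Bool} (hp1 : g1 p = true) (hph : MinOne h p) :
    MinOne (fun x => g1 x && h x) p := by
  refine ⟨?_, ?_⟩
  · show (g1 p && h p) = true
    rw [hp1, hph.1]
    rfl
  · intro z hz hzne
    show (g1 z && h z) = false
    rw [hph.2 z hz hzne, Bool.and_false]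

lemma S_ineq : ∀ (k : ℕ) (g h : (Fin n → Bool) → Bool),
    Positive g → Positive h → (∀ x, g x = true → h x = true) → g ≠ h →
    {i : Fin n | Relevant g i}.ncard ≤ k →
    {i : Fin n | Relevant g i ∧ ¬ Relevant h i}.ncard + 1 ≤
      {p : Fin n → Bool | MinOne g p ∧ ¬ MinOne h p}.ncard +
      {q : Fin n → Bool | MaxZero g q ∧ h q = true}.ncard := by
  intro k
  induction k using Nat.strong_induction_on with
  | _ k ih =>
  intro g h hgP hhP hgh hne hk
  by_cases hL : ∃ j, Relevant g j ∧ ¬ Relevant h j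
  · obtain ⟨j, hjg, hjh⟩ := hL
    set g0 := res g j false with hg0def
    set g1 := res g j true with hg1def
    have hg0P : Positive g0 := res_positive hgP j false
    have hg1P : Positive g1 := res_positive hgP j true
    have hg01 : ∀ x, g0 x = true → g1 x = true := fun x hx => res_le hgP j x hx
    have hg0h : ∀ x, g0 x = true → h x = true := by
      intro x hx
      have := hgh _ hx
      rwa [indep_eval hjh] at this
    have hg1h : ∀ x, g1 x = true → h x = true := by
      intro x hx
      have := hgh _ hx
      rwa [indep_eval hjh] at this
    have hg0ne1 : g0 ≠ g1 := by
      obtain ⟨x, hx⟩ := hjg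
      exact fun he => hx (congrFun he x)
    -- measure facts
    have hmeas : ∀ b : Bool, {i : Fin n | Relevant (res g j b) i}.ncard < k := by
      intro b
      have hsub : {i : Fin n | Relevant (res g j b) i} ⊆ {i : Fin n | Relevant g i} \ {j} := by
        intro i hi
        obtain ⟨hij, hrel⟩ := relevant_of_res hi
        exact ⟨hrel, by simpa using hij⟩
      have hss : {i : Fin n | Relevant g i} \ {j} ⊂ {i : Fin n | Relevant g i} := by
        refine ⟨Set.diff_subset, fun hcon => ?_⟩
        have := hcon (show j ∈ {i : Fin n | Relevant g i} from hjg)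
        simp at this
      have h1 : ({i : Fin n | Relevant g i} \ {j}).ncard < {i : Fin n | Relevant g i}.ncard :=
        Set.ncard_lt_ncard hss (Set.toFinite _)
      have h2 : {i : Fin n | Relevant (res g j b) i}.ncard ≤
          ({i : Fin n | Relevant g i} \ {j}).ncard :=
        Set.ncard_le_ncard hsub (Set.toFinite _)
      omega
    -- coordinate facts
    have hcoord0 : ∀ p : Fin n → Bool, MinOne g0 p → p j = false :=
      fun p hp => minone_coord (not_relevant_res g j false) hp
    have hcoord1 : ∀ p : Fin n → Bool, MinOne g1 p → p j = false :=
      fun p hp => minone_coord (not_relevant_res g j true) hp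
    have hcoordh : ∀ p : Fin n → Bool, MinOne h p → p j = false :=
      fun p hp => minone_coord hjh hp
    have hzcoord0 : ∀ q : Fin n → Bool, MaxZero g0 q → q j = true :=
      fun q hq => maxzero_coord (not_relevant_res g j false) hq
    have hzcoord1 : ∀ q : Fin n → Bool, MaxZero g1 q → q j = true :=
      fun q hq => maxzero_coord (not_relevant_res g j true) hq
    by_cases hc : g1 = h
    · -- subcase g1 = h
      have hne0 : g0 ≠ h := fun he => hg0ne1 (he.trans hc.symm)
      have IH0 := ih _ (hmeas false) g0 h hg0P hhP hg0h hne0 (le_refl _)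
      -- D side
      set D : Set (Fin n → Bool) := {p | MinOne g p ∧ ¬ MinOne h p} with hD
      set Yy : Set (Fin n → Bool) := {q | MaxZero g q ∧ h q = true} with hYy
      set D0 : Set (Fin n → Bool) := {p | MinOne g0 p ∧ ¬ MinOne h p} with hD0
      set Y0 : Set (Fin n → Bool) := {q | MaxZero g0 q ∧ h q = true} with hY0
      set Xg : Set (Fin n → Bool) := {p | MinOne g1 p ∧ g0 p = false} with hXg
      have hD0D : D0 ⊆ D := fun p hp => ⟨minone_res_false_subset hp.1, hp.2⟩
      have hXgD : (fun p => Function.update p j true) '' Xg ⊆ D := by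
        rintro a ⟨p, hp, rfl⟩
        refine ⟨minone_lift hgP hp.1 hp.2, fun hmh => ?_⟩
        have := hcoordh _ hmh
        simp at this
      have hdisjD : Disjoint D0 ((fun p => Function.update p j true) '' Xg) := by
        rw [Set.disjoint_left]
        rintro a ha ⟨p, hp, rfl⟩
        have h1 : Function.update p j true j = false := hcoord0 _ ha.1
        simp at h1
      have himg : ((fun p => Function.update p j true) '' Xg).ncard = Xg.ncard := by
        apply Set.ncard_image_of_injOn
        intro p1 h1 p2 h2 he
        exact update_inj_of_coord (hcoord1 _ h1.1) (hcoord1 _ h2.1) he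
      have hDcount : D0.ncard + Xg.ncard ≤ D.ncard := by
        have := two_disjoint_le hD0D hXgD hdisjD
        omega
      have hXgne : 1 ≤ Xg.ncard := by
        obtain ⟨x, hx⟩ := Function.ne_iff.mp hg0ne1
        have hx0 : g0 x = false := by
          cases hg0x : g0 x with
          | false => rfl
          | true => exact absurd (hg01 x hg0x) (by rw [hg0x] at hx; intro hh; exact hx (hh ▸ rfl))
        have hx1 : g1 x = true := by
          cases hg1x : g1 x with
          | true => rfl
          | false => exact absurd (hx0.trans hg1x.symm) hx
        obtain ⟨p, hpx, hp⟩ := exists_minone_below hx1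
        have hg0p : g0 p = false := by
          cases hg0p' : g0 p with
          | false => rfl
          | true =>
            have := hg0P p x hpx hg0p'
            rw [hx0] at this
            exact absurd this (by simp)
        have : p ∈ Xg := ⟨hp, hg0p⟩
        have := Set.ncard_pos (Set.toFinite Xg) |>.mpr ⟨p, this⟩
        omega
      -- Y side
      have hB1 : {q | q ∈ Y0 ∧ g1 q = false} ⊆ Yy := by
        rintro q ⟨⟨hq, hhq⟩, hg1q⟩
        exact ⟨maxzero_res_true_subset (maxzero_pass hgP hq hg1q), hhq⟩
      have hB2 : (fun q => Function.update q j false) '' {q | q ∈ Y0 ∧ g1 q = true} ⊆ Yy := by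
        rintro a ⟨q, ⟨⟨hq, hhq⟩, hg1q⟩, rfl⟩
        refine ⟨maxzero_lift hgP hq hg1q, ?_⟩
        rw [indep_eval hjh]
        exact hhq
      have hdisjY : Disjoint {q | q ∈ Y0 ∧ g1 q = false}
          ((fun q => Function.update q j false) '' {q | q ∈ Y0 ∧ g1 q = true}) := by
        rw [Set.disjoint_left]
        rintro a ⟨⟨ha, _⟩, _⟩ ⟨q, hq, rfl⟩
        have h1 : Function.update q j false j = true := hzcoord0 _ ha
        simp at h1
      have himgY : ((fun q => Function.update q j false) '' {q | q ∈ Y0 ∧ g1 q = true}).ncard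
          = {q | q ∈ Y0 ∧ g1 q = true}.ncard := by
        apply Set.ncard_image_of_injOn
        intro q1 h1 q2 h2 he
        exact update_inj_of_coord (hzcoord0 _ h1.1.1) (hzcoord0 _ h2.1.1) he
      have hYpart : {q | q ∈ Y0 ∧ g1 q = true}.ncard + {q | q ∈ Y0 ∧ ¬ (g1 q = true)}.ncard
          = Y0.ncard := partition_ncard Y0 (fun q => g1 q = true)
      have hYfalse : {q | q ∈ Y0 ∧ ¬ (g1 q = true)} = {q | q ∈ Y0 ∧ g1 q = false} := by
        ext q
        simp [Bool.not_eq_true]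
      have hYcount : Y0.ncard ≤ Yy.ncard := by
        have h2 := two_disjoint_le hB1 hB2 hdisjY
        rw [himgY] at h2
        rw [hYfalse] at hYpart
        omega
      -- L side
      have hLsub : {i : Fin n | Relevant g i ∧ ¬ Relevant h i} ⊆
          insert j {i : Fin n | Relevant g0 i ∧ ¬ Relevant h i} := by
        rintro i ⟨hri, hnri⟩
        rcases eq_or_ne i j with rfl | hij
        · exact Set.mem_insert _ _
        · rcases relevant_res_or hij hri with h0 | h1
          · exact Set.mem_insert_of_mem _ ⟨h0, hnri⟩
          · rw [← hg1def, hc] at h1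
            exact absurd h1 hnri
      have hLcount : {i : Fin n | Relevant g i ∧ ¬ Relevant h i}.ncard ≤
          {i : Fin n | Relevant g0 i ∧ ¬ Relevant h i}.ncard + 1 := by
        have h1 := Set.ncard_le_ncard hLsub (Set.toFinite _)
        have h2 := Set.ncard_insert_le j {i : Fin n | Relevant g0 i ∧ ¬ Relevant h i}
        omega
      omega
    · -- subcase g1 ≠ h
      set gh : (Fin n → Bool) → Bool := fun x => g1 x && h x with hghdef
      have hghP : Positive gh := by
        intro x y hxy hx
        simp only [hghdef, Bool.and_eq_true] at hx ⊢
        exact ⟨hg1P x y hxy hx.1, hhP x y hxy hx.2⟩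
      have hg0gh : ∀ x, g0 x = true → gh x = true := by
        intro x hx
        simp only [hghdef, Bool.and_eq_true]
        exact ⟨hg01 x hx, hg0h x hx⟩
      have hne0gh : g0 ≠ gh := by
        intro he
        apply hg0ne1
        funext x
        cases hg1x : g1 x with
        | false =>
          have hcx : g0 x = (g1 x && h x) := congrFun he x
          rw [hg1x, Bool.false_and] at hcx
          exact hcx
        | true =>
          have hcx : g0 x = (g1 x && h x) := congrFun he x
          rw [hg1x, hg1h x hg1x, Bool.and_true] at hcx
          exact hcx
      have IH1 := ih _ (hmeas false) g0 gh hg0P hghP hg0gh hne0gh (le_refl _)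
      have IH2 := ih _ (hmeas true) g1 h hg1P hhP hg1h hc (le_refl _)
      set D : Set (Fin n → Bool) := {p | MinOne g p ∧ ¬ MinOne h p} with hD
      set Yy : Set (Fin n → Bool) := {q | MaxZero g q ∧ h q = true} with hYy
      set R1 : Set (Fin n → Bool) := {p | MinOne g0 p ∧ ¬ MinOne gh p} with hR1
      set Ya : Set (Fin n → Bool) := {q | MaxZero g0 q ∧ gh q = true} with hYa
      set R2 : Set (Fin n → Bool) := {p | MinOne g1 p ∧ ¬ MinOne h p} with hR2
      set Yb : Set (Fin n → Bool) := {q | MaxZero g1 q ∧ h q = true} with hYb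
      -- D side
      have hA1D : R1 ⊆ D := by
        rintro p ⟨hp0, hpgh⟩
        refine ⟨minone_res_false_subset hp0, fun hmh => ?_⟩
        exact hpgh (minone_gh' hg1h (hg01 p hp0.1) hmh)
      have hA2D : {p | p ∈ R2 ∧ g0 p = true} ⊆ D := by
        rintro p ⟨⟨hp1, hph⟩, hp0⟩
        exact ⟨minone_res_false_subset (minone_pass hgP hp1 hp0), hph⟩
      have hA3D : (fun p => Function.update p j true) '' {p | p ∈ R2 ∧ g0 p = false} ⊆ D := by
        rintro a ⟨p, ⟨⟨hp1, _⟩, hp0⟩, rfl⟩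
        refine ⟨minone_lift hgP hp1 hp0, fun hmh => ?_⟩
        have := hcoordh _ hmh
        simp at this
      have hdisj12 : Disjoint R1 {p | p ∈ R2 ∧ g0 p = true} := by
        rw [Set.disjoint_left]
        rintro p ⟨_, hpgh⟩ ⟨⟨hp1, _⟩, _⟩
        exact hpgh (minone_gh hg1h hp1)
      have hdisj13 : Disjoint R1 ((fun p => Function.update p j true) ''
          {p | p ∈ R2 ∧ g0 p = false}) := by
        rw [Set.disjoint_left]
        rintro a ⟨ha, _⟩ ⟨p, _, rfl⟩
        have h1 : Function.update p j true j = false := hcoord0 _ ha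
        simp at h1
      have hdisj23 : Disjoint {p | p ∈ R2 ∧ g0 p = true} ((fun p => Function.update p j true) ''
          {p | p ∈ R2 ∧ g0 p = false}) := by
        rw [Set.disjoint_left]
        rintro a ⟨⟨ha, _⟩, _⟩ ⟨p, _, rfl⟩
        have h1 : Function.update p j true j = false := hcoord1 _ ha
        simp at h1
      have himg3 : ((fun p => Function.update p j true) '' {p | p ∈ R2 ∧ g0 p = false}).ncard
          = {p | p ∈ R2 ∧ g0 p = false}.ncard := by
        apply Set.ncard_image_of_injOn
        intro p1 h1 p2 h2 he
        exact update_inj_of_coord (hcoord1 _ h1.1.1) (hcoord1 _ h2.1.1) he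
      have hR2part : {p | p ∈ R2 ∧ g0 p = true}.ncard + {p | p ∈ R2 ∧ ¬ (g0 p = true)}.ncard
          = R2.ncard := partition_ncard R2 (fun p => g0 p = true)
      have hR2false : {p | p ∈ R2 ∧ ¬ (g0 p = true)} = {p | p ∈ R2 ∧ g0 p = false} := by
        ext p
        simp [Bool.not_eq_true]
      have hDcount : R1.ncard + R2.ncard ≤ D.ncard := by
        have h3 := three_disjoint_le hA1D hA2D hA3D hdisj12 hdisj13 hdisj23
        rw [himg3] at h3
        rw [hR2false] at hR2part
        omega
      -- Y side
      have hB1 : Yb ⊆ Yy := by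
        rintro q ⟨hq, hhq⟩
        exact ⟨maxzero_res_true_subset hq, hhq⟩
      have hB2 : (fun q => Function.update q j false) '' Ya ⊆ Yy := by
        rintro a ⟨q, ⟨hq, hghq⟩, rfl⟩
        simp only [hghdef, Bool.and_eq_true] at hghq
        refine ⟨maxzero_lift hgP hq hghq.1, ?_⟩
        rw [indep_eval hjh]
        exact hghq.2
      have hdisjY : Disjoint Yb ((fun q => Function.update q j false) '' Ya) := by
        rw [Set.disjoint_left]
        rintro a ⟨ha, _⟩ ⟨q, _, rfl⟩
        have h1 : Function.update q j false j = true := hzcoord1 _ ha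
        simp at h1
      have himgY : ((fun q => Function.update q j false) '' Ya).ncard = Ya.ncard := by
        apply Set.ncard_image_of_injOn
        intro q1 h1 q2 h2 he
        exact update_inj_of_coord (hzcoord0 _ h1.1) (hzcoord0 _ h2.1) he
      have hYcount : Yb.ncard + Ya.ncard ≤ Yy.ncard := by
        have h2 := two_disjoint_le hB1 hB2 hdisjY
        omega
      -- L side
      have hLsub : {i : Fin n | Relevant g i ∧ ¬ Relevant h i} ⊆
          insert j ({i : Fin n | Relevant g0 i ∧ ¬ Relevant gh i} ∪
            {i : Fin n | Relevant g1 i ∧ ¬ Relevant h i}) := by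
        rintro i ⟨hri, hnri⟩
        rcases eq_or_ne i j with rfl | hij
        · exact Set.mem_insert _ _
        · apply Set.mem_insert_of_mem
          by_cases hrel1 : Relevant g1 i
          · exact Set.mem_union_right _ ⟨hrel1, hnri⟩
          · rcases relevant_res_or hij hri with h0 | h1
            · refine Set.mem_union_left _ ⟨h0, ?_⟩
              have := not_relevant_and hrel1 hnri
              rwa [← hghdef] at this
            · exact absurd h1 hrel1
      have hLcount : {i : Fin n | Relevant g i ∧ ¬ Relevant h i}.ncard ≤
          {i : Fin n | Relevant g0 i ∧ ¬ Relevant gh i}.ncard +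
          {i : Fin n | Relevant g1 i ∧ ¬ Relevant h i}.ncard + 1 := by
        have h1 := Set.ncard_le_ncard hLsub (Set.toFinite _)
        have h2 := Set.ncard_insert_le j ({i : Fin n | Relevant g0 i ∧ ¬ Relevant gh i} ∪
            {i : Fin n | Relevant g1 i ∧ ¬ Relevant h i})
        have h3 := Set.ncard_union_le {i : Fin n | Relevant g0 i ∧ ¬ Relevant gh i}
            {i : Fin n | Relevant g1 i ∧ ¬ Relevant h i}
        omega
      omega
  · -- L empty
    have hL0 : {i : Fin n | Relevant g i ∧ ¬ Relevant h i} = ∅ := by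
      ext i
      simp only [Set.mem_setOf_eq, Set.mem_empty_iff_false, iff_false, not_and]
      intro h1 h2
      exact hL ⟨i, h1, h2⟩
    rw [hL0, Set.ncard_empty]
    obtain ⟨x, hgx⟩ := Function.ne_iff.mp hne
    have hgxf : g x = false := by
      cases hg0x : g x with
      | false => rfl
      | true => exact absurd (hgh x hg0x) (fun hh => hgx (hg0x.trans hh.symm))
    have hhxt : h x = true := by
      cases hhx : h x with
      | true => rfl
      | false => exact absurd (hgxf.trans hhx.symm) hgx
    obtain ⟨q, hxq, hq⟩ := exists_maxzero_above hgxf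
    have hY : q ∈ {q : Fin n → Bool | MaxZero g q ∧ h q = true} :=
      ⟨hq, hhP x q hxq hhxt⟩
    have := Set.ncard_pos (Set.toFinite {q : Fin n → Bool | MaxZero g q ∧ h q = true}) |>.mpr ⟨q, hY⟩
    omega

end ExtremalAux

theorem extremal_points_lower_bound {n : ℕ}
    (f : (Fin n → Bool) → Bool) (hf : Positive f) :
    {i : Fin n | Relevant f i}.ncard + 1 ≤
      {y : Fin n → Bool | MinOne f y ∨ MaxZero f y}.ncard := by
  classical
  by_cases hconst : f = fun _ => true
  · subst hconst
    have hrel : {i : Fin n | Relevant (fun _ => true) i} = ∅ := by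
      ext i
      simp [Relevant]
    rw [hrel, Set.ncard_empty]
    have hmem : (fun _ => false : Fin n → Bool) ∈
        {y : Fin n → Bool | MinOne (fun _ => true) y ∨ MaxZero (fun _ => true) y} := by
      left
      refine ⟨rfl, fun z hz hzne => ?_⟩
      exact absurd (funext fun i => le_antisymm (hz i) (Bool.false_le _)) hzne
    have := Set.ncard_pos (Set.toFinite _) |>.mpr ⟨_, hmem⟩
    omega
  · have hmain := ExtremalAux.S_ineq ({i : Fin n | Relevant f i}.ncard) f (fun _ => true)
      hf (fun _ _ _ _ => rfl) (fun _ _ => rfl) hconst (le_refl _)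
    have hLeq : {i : Fin n | Relevant f i ∧ ¬ Relevant (fun _ => true : (Fin n → Bool) → Bool) i}
        = {i : Fin n | Relevant f i} := by
      ext i
      simp only [Set.mem_setOf_eq, and_iff_left_iff_imp]
      intro _
      rintro ⟨x, hx⟩
      exact hx rfl
    rw [hLeq] at hmain
    have hDsub : {p : Fin n → Bool | MinOne f p ∧ ¬ MinOne (fun _ => true) p} ⊆
        {y : Fin n → Bool | MinOne f y ∨ MaxZero f y} := fun p hp => Or.inl hp.1
    have hYsub : {q : Fin n → Bool | MaxZero f q ∧ (fun _ => true : (Fin n → Bool) → Bool) q = true} ⊆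
        {y : Fin n → Bool | MinOne f y ∨ MaxZero f y} := fun q hq => Or.inr hq.1
    have hdisj : Disjoint {p : Fin n → Bool | MinOne f p ∧ ¬ MinOne (fun _ => true) p}
        {q : Fin n → Bool | MaxZero f q ∧ (fun _ => true : (Fin n → Bool) → Bool) q = true} := by
      rw [Set.disjoint_left]
      rintro a ⟨h1, _⟩ ⟨h2, _⟩
      exact absurd (h1.1.symm.trans h2.1) (by simp)
    have := ExtremalAux.two_disjoint_le hDsub hYsub hdisj
    beta_reduce at this
    omega
end

section
/- Let f be a positive non-canalyzing Boolean function on {0,1}^n such that for each variable x_i both restrictions f|_{x_i=0} and f|_{x_i=1} are canalyzing. Then for each i there exists a maximal zero of f having 0 in exactly two coordinates, one of which is i, and a minimal one of f having 1 in exactly two coordinates, one of which is i. -/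
/-- `f` is canalyzing: fixing some variable to some value makes it constant. -/
def Canalyzing {n : ℕ} (f : (Fin n → Bool) → Bool) : Prop :=
  ∃ (i : Fin n) (b c : Bool), ∀ x : Fin n → Bool, f (Function.update x i b) = c

/-- The restriction `f|_{x_i = b}`, an `n`-variable function obtained from the
`(n+1)`-variable function `f` by fixing coordinate `i` to `b`. -/
def restrict {n : ℕ} (f : (Fin (n + 1) → Bool) → Bool) (i : Fin (n + 1)) (b : Bool) :
    (Fin n → Bool) → Bool :=
  fun a => f (i.insertNth b a)

/-- Auxiliary: pointwise characterization of `≤` on Boolean vectors. -/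
lemma aux_le_of_imp {n : ℕ} {x y : Fin n → Bool} (h : ∀ k, x k = true → y k = true) :
    x ≤ y := by
  intro k
  cases hx : x k
  · exact Bool.false_le _
  · simp [h k hx]

lemma aux_imp_of_le {n : ℕ} {x y : Fin n → Bool} (h : x ≤ y) :
    ∀ k, x k = true → y k = true := by
  intro k hk
  have hle := h k
  rw [hk] at hle
  cases hy : y k
  · rw [hy] at hle; exact absurd (Bool.le_iff_imp.mp hle rfl) (by decide)
  · rfl

lemma aux_le_insertNth {n : ℕ} {x : Fin (n + 1) → Bool} {i : Fin (n + 1)} {b : Bool}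
    {a : Fin n → Bool} (h1 : x i = true → b = true)
    (h2 : ∀ k, x (i.succAbove k) = true → a k = true) : x ≤ i.insertNth b a := by
  apply aux_le_of_imp
  intro m hm
  rcases eq_or_ne m i with rfl | hne
  · rw [Fin.insertNth_apply_same]; exact h1 hm
  · obtain ⟨k, rfl⟩ := Fin.exists_succAbove_eq hne
    rw [Fin.insertNth_apply_succAbove]; exact h2 k hm

lemma aux_insertNth_le {n : ℕ} {x : Fin (n + 1) → Bool} {i : Fin (n + 1)} {b : Bool}
    {a : Fin n → Bool} (h1 : b = true → x i = true)
    (h2 : ∀ k, a k = true → x (i.succAbove k) = true) : i.insertNth b a ≤ x := by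
  apply aux_le_of_imp
  intro m hm
  rcases eq_or_ne m i with rfl | hne
  · rw [Fin.insertNth_apply_same] at hm; exact h1 hm
  · obtain ⟨k, rfl⟩ := Fin.exists_succAbove_eq hne
    rw [Fin.insertNth_apply_succAbove] at hm; exact h2 k hm

theorem weight_two_extremal_points {n : ℕ} (f : (Fin (n + 1) → Bool) → Bool)
    (hf : Positive f) (hnc : ¬ Canalyzing f)
    (hres : ∀ (i : Fin (n + 1)) (b : Bool), Canalyzing (restrict f i b)) :
    ∀ i : Fin (n + 1),
      (∃ y : Fin (n + 1) → Bool, MaxZero f y ∧ y i = false ∧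
        {j : Fin (n + 1) | y j = false}.ncard = 2) ∧
      (∃ y : Fin (n + 1) → Bool, MinOne f y ∧ y i = true ∧
        {j : Fin (n + 1) | y j = true}.ncard = 2) := by
  -- unit vectors are false points
  have he : ∀ p : Fin (n + 1), f (fun k => decide (k = p)) = false := by
    intro p
    cases hfe : f (fun k => decide (k = p))
    · rfl
    · exfalso; apply hnc
      refine ⟨p, true, true, fun x => ?_⟩
      refine hf _ _ (aux_le_of_imp fun k hk => ?_) hfe
      have hkp : k = p := by simpa using hk
      subst hkp
      simp [Function.update_self]
  -- co-unit vectors are true points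
  have hd : ∀ p : Fin (n + 1), f (fun k => !decide (k = p)) = true := by
    intro p
    cases hfd : f (fun k => !decide (k = p))
    · exfalso; apply hnc
      refine ⟨p, false, false, fun x => ?_⟩
      cases hfx : f (Function.update x p false)
      · rfl
      · exfalso
        have hle : Function.update x p false ≤ (fun k => !decide (k = p)) := by
          apply aux_le_of_imp
          intro k hk
          have hkp : k ≠ p := by
            intro h; subst h; rw [Function.update_self] at hk; exact absurd hk (by decide)
          simp [hkp]
        have := hf _ _ hle hfx
        rw [this] at hfd; exact absurd hfd (by decide)
    · rfl
  intro i
  constructor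
  -- MaxZero part, from canalyzation of f|_{x_i = 0}
  · obtain ⟨j, b, c, hc⟩ := hres i false
    cases b
    · cases c
      · -- good case b = false, c = false: f = 0 whenever x_i = 0 and x_{j'} = 0
        set j' : Fin (n + 1) := i.succAbove j with hj'
        have hji : j' ≠ i := Fin.succAbove_ne i j
        refine ⟨fun k => !(decide (k = i) || decide (k = j')), ⟨?_, ?_⟩, by simp, ?_⟩
        · have hy : i.insertNth false (Function.update (fun _ => true) j false) =
              (fun k => !(decide (k = i) || decide (k = j'))) := by
            funext m
            rcases eq_or_ne m i with rfl | hne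
            · simp [Fin.insertNth_apply_same]
            · obtain ⟨k, rfl⟩ := Fin.exists_succAbove_eq hne
              rw [Fin.insertNth_apply_succAbove]
              rcases eq_or_ne k j with rfl | hkj
              · simp [Function.update_self, hj']
              · have h1 : i.succAbove k ≠ i := Fin.succAbove_ne i k
                have h2 : i.succAbove k ≠ j' := by
                  rw [hj']; exact fun h => hkj (Fin.succAbove_right_injective h)
                simp [Function.update_of_ne hkj, h1, h2]
          rw [← hy]
          exact hc (fun _ => true)
        · -- maximality
          intro z hz hne
          have hzy := aux_imp_of_le hz
          obtain ⟨k, hk⟩ := Function.ne_iff.mp hne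
          have hyk : (!(decide (k = i) || decide (k = j'))) = false ∧ z k = true := by
            cases hz1 : z k
            · exfalso
              cases hy1 : (!(decide (k = i) || decide (k = j'))) <;> rw [hz1, hy1] at hk
              · exact hk rfl
              · exact absurd (hzy k hy1) (by rw [hz1]; decide)
            · refine ⟨?_, rfl⟩
              cases hy1 : (!(decide (k = i) || decide (k = j')))
              · rfl
              · rw [hz1, hy1] at hk; exact absurd rfl hk
          have hkij : k = i ∨ k = j' := by
            rcases eq_or_ne k i with h | h
            · exact Or.inl h
            · right
              by_contra h2
              have := hyk.1
              simp [h, h2] at this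
          rcases hkij with hki | hkj'
          · -- k = i : z dominates the co-unit vector at j'
            refine hf _ _ (aux_le_of_imp fun m hm => ?_) (hd j')
            have hmj : m ≠ j' := by simpa using hm
            rcases eq_or_ne m k with rfl | hmk
            · exact hyk.2
            · have hmi : m ≠ i := hki ▸ hmk
              refine hzy m ?_
              simp [hmi, hmj]
          · -- k = j' : z dominates the co-unit vector at i
            refine hf _ _ (aux_le_of_imp fun m hm => ?_) (hd i)
            have hmi : m ≠ i := by simpa using hm
            rcases eq_or_ne m k with rfl | hmk
            · exact hyk.2
            · have hmj : m ≠ j' := hkj' ▸ hmk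
              refine hzy m ?_
              simp [hmi, hmj]
        · have hset : {m : Fin (n + 1) | (!(decide (m = i) || decide (m = j'))) = false} =
              {i, j'} := by
            ext m
            by_cases hmi : m = i <;> by_cases hmj : m = j' <;>
              simp [hmi, hmj, Set.mem_insert_iff, Set.mem_singleton_iff]
          rw [hset]
          exact Set.ncard_pair hji.symm
      · -- bad case b = false, c = true : f|_{x_i=0} ≡ 1
        exfalso; apply hnc
        refine ⟨i, false, true, fun x => ?_⟩
        have h0 := hc (fun k => x (i.succAbove k))
        simp only [restrict] at h0
        refine hf _ _ (aux_insertNth_le (fun h => absurd h (by decide)) fun k hk => ?_) h0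
        rcases eq_or_ne k j with rfl | hkj
        · rw [Function.update_self] at hk
          exact absurd hk (by decide)
        · rw [Function.update_of_ne hkj] at hk
          rw [Function.update_of_ne (Fin.succAbove_ne i k)]
          exact hk
    · cases c
      · -- bad case b = true, c = false : f|_{x_i=0} ≡ 0
        exfalso; apply hnc
        refine ⟨i, false, false, fun x => ?_⟩
        cases hfx : f (Function.update x i false)
        · rfl
        · exfalso
          have h0 := hc (fun k => x (i.succAbove k))
          simp only [restrict] at h0
          have hle : Function.update x i false ≤
              i.insertNth false (Function.update (fun k => x (i.succAbove k)) j true) := by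
            refine aux_le_insertNth (fun h => ?_) (fun k hk => ?_)
            · rw [Function.update_self] at h; exact absurd h (by decide)
            · rw [Function.update_of_ne (Fin.succAbove_ne i k)] at hk
              rcases eq_or_ne k j with rfl | hkj
              · rw [Function.update_self]
              · rw [Function.update_of_ne hkj]
                exact hk
          have := hf _ _ hle hfx
          rw [this] at h0; exact absurd h0 (by decide)
      · -- bad case b = true, c = true : f|_{x_{j'}=1} ≡ 1
        exfalso; apply hnc
        refine ⟨i.succAbove j, true, true, fun x => ?_⟩
        have h0 := hc (fun k => x (i.succAbove k))
        simp only [restrict] at h0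
        refine hf _ _ (aux_insertNth_le (fun h => absurd h (by decide)) fun k hk => ?_) h0
        rcases eq_or_ne k j with rfl | hkj
        · rw [Function.update_self]
        · rw [Function.update_of_ne hkj] at hk
          rw [Function.update_of_ne (fun h => hkj (Fin.succAbove_right_injective h))]
          exact hk
  -- MinOne part, from canalyzation of f|_{x_i = 1}
  · obtain ⟨j, b, c, hc⟩ := hres i true
    cases b
    · cases c
      · -- bad case b = false, c = false : f|_{x_{j'}=0} ≡ 0
        exfalso; apply hnc
        refine ⟨i.succAbove j, false, false, fun x => ?_⟩
        cases hfx : f (Function.update x (i.succAbove j) false)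
        · rfl
        · exfalso
          have h0 := hc (fun k => x (i.succAbove k))
          simp only [restrict] at h0
          have hle : Function.update x (i.succAbove j) false ≤
              i.insertNth true (Function.update (fun k => x (i.succAbove k)) j false) := by
            refine aux_le_insertNth (fun _ => rfl) (fun k hk => ?_)
            rcases eq_or_ne k j with rfl | hkj
            · rw [Function.update_self] at hk
              exact absurd hk (by decide)
            · rw [Function.update_of_ne
                (fun h => hkj (Fin.succAbove_right_injective h))] at hk
              rw [Function.update_of_ne hkj]
              exact hk
          have := hf _ _ hle hfx
          rw [this] at h0; exact absurd h0 (by decide)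
      · -- bad case b = false, c = true : f|_{x_i=1} ≡ 1
        exfalso; apply hnc
        refine ⟨i, true, true, fun x => ?_⟩
        have h0 := hc (fun k => x (i.succAbove k))
        simp only [restrict] at h0
        refine hf _ _ (aux_insertNth_le
          (fun _ => by rw [Function.update_self]) fun k hk => ?_) h0
        rcases eq_or_ne k j with rfl | hkj
        · rw [Function.update_self] at hk
          exact absurd hk (by decide)
        · rw [Function.update_of_ne hkj] at hk
          rw [Function.update_of_ne (Fin.succAbove_ne i k)]
          exact hk
    · cases c
      · -- bad case b = true, c = false : f|_{x_i=1} ≡ 0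
        exfalso; apply hnc
        refine ⟨i, true, false, fun x => ?_⟩
        cases hfx : f (Function.update x i true)
        · rfl
        · exfalso
          have h0 := hc (fun k => x (i.succAbove k))
          simp only [restrict] at h0
          have hle : Function.update x i true ≤
              i.insertNth true (Function.update (fun k => x (i.succAbove k)) j true) := by
            refine aux_le_insertNth (fun _ => rfl) (fun k hk => ?_)
            rw [Function.update_of_ne (Fin.succAbove_ne i k)] at hk
            rcases eq_or_ne k j with rfl | hkj
            · rw [Function.update_self]
            · rw [Function.update_of_ne hkj]
              exact hk
          have := hf _ _ hle hfx
          rw [this] at h0; exact absurd h0 (by decide)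
      · -- good case b = true, c = true : f = 1 whenever x_i = 1 and x_{j'} = 1
        set j' : Fin (n + 1) := i.succAbove j with hj'
        have hji : j' ≠ i := Fin.succAbove_ne i j
        refine ⟨fun k => decide (k = i) || decide (k = j'), ⟨?_, ?_⟩, by simp, ?_⟩
        · have hy : i.insertNth true (Function.update (fun _ => false) j true) =
              (fun k => (decide (k = i) || decide (k = j'))) := by
            funext m
            rcases eq_or_ne m i with rfl | hne
            · simp [Fin.insertNth_apply_same]
            · obtain ⟨k, rfl⟩ := Fin.exists_succAbove_eq hne
              rw [Fin.insertNth_apply_succAbove]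
              rcases eq_or_ne k j with rfl | hkj
              · simp [Function.update_self, hj']
              · have h1 : i.succAbove k ≠ i := Fin.succAbove_ne i k
                have h2 : i.succAbove k ≠ j' := by
                  rw [hj']; exact fun h => hkj (Fin.succAbove_right_injective h)
                simp [Function.update_of_ne hkj, h1, h2]
          rw [← hy]
          exact hc (fun _ => false)
        · -- minimality
          intro z hz hne
          have hzy := aux_imp_of_le hz
          obtain ⟨k, hk⟩ := Function.ne_iff.mp hne
          have hyk : (decide (k = i) || decide (k = j')) = true ∧ z k = false := by
            cases hz1 : z k
            · refine ⟨?_, rfl⟩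
              cases hy1 : (decide (k = i) || decide (k = j'))
              · rw [hz1, hy1] at hk; exact absurd rfl hk
              · rfl
            · exfalso
              apply hk
              rw [hz1, hzy k hz1]
          have hkij : k = i ∨ k = j' := by
            have := hyk.1
            simpa using this
          cases hfz : f z
          · rfl
          · exfalso
            rcases hkij with hki | hkj'
            · -- k = i : z is below the unit vector at j'
              have h1 : f (fun m => decide (m = j')) = true := by
                refine hf _ _ (aux_le_of_imp fun m hm => ?_) hfz
                have hmk : m ≠ k := by
                  intro h; subst h; rw [hyk.2] at hm; exact absurd hm (by decide)
                have hmi : m ≠ i := hki ▸ hmk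
                have h2 := hzy m hm
                simp [hmi] at h2
                simp [h2]
              rw [he j'] at h1; exact absurd h1 (by decide)
            · -- k = j' : z is below the unit vector at i
              have h1 : f (fun m => decide (m = i)) = true := by
                refine hf _ _ (aux_le_of_imp fun m hm => ?_) hfz
                have hmk : m ≠ k := by
                  intro h; subst h; rw [hyk.2] at hm; exact absurd hm (by decide)
                have hmj : m ≠ j' := hkj' ▸ hmk
                have h2 := hzy m hm
                simp [hmj] at h2
                simp [h2]
              rw [he i] at h1; exact absurd h1 (by decide)
        · have hset : {m : Fin (n + 1) | (decide (m = i) || decide (m = j')) = true} =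
              {i, j'} := by
            ext m
            by_cases hmi : m = i <;> by_cases hmj : m = j' <;>
              simp [hmi, hmj, Set.mem_insert_iff, Set.mem_singleton_iff]
          rw [hset]
          exact Set.ncard_pair hji.symm
end

section
/- Let f be a positive non-canalyzing Boolean function on {0,1}^n, n ≠ 4, such that for each variable x_i both restrictions f|_{x_i=0} and f|_{x_i=1} are canalyzing. Then there exists a point y of Hamming weight 2 such that y is a minimal one of f and its complement (flipping all coordinates) is a maximal zero of f. -/
namespace AuxMinOne

variable {m : ℕ}

/-- indicator of the pair `{i,j}` -/
def pt2 (i j : Fin m) : Fin m → Bool := fun p => p == i || p == j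
/-- complement of the pair `{i,j}` -/
def cpt2 (i j : Fin m) : Fin m → Bool := fun p => !(p == i || p == j)
/-- indicator of `{i}` -/
def pt1 (i : Fin m) : Fin m → Bool := fun p => p == i
/-- complement of `{i}` -/
def cpt1 (i : Fin m) : Fin m → Bool := fun p => !(p == i)

lemma le_iff {x y : Fin m → Bool} : x ≤ y ↔ ∀ p, x p = true → y p = true := by
  constructor
  · intro h p hp
    have h2 := h p
    rw [hp] at h2
    exact le_antisymm (Bool.le_true _) h2
  · intro h p
    cases hx : x p with
    | false => exact Bool.false_le _
    | true => rw [h p hx]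

lemma pt2_comm (i j : Fin m) : pt2 i j = pt2 j i := by
  funext p; simp [pt2, Bool.or_comm]

lemma cpt2_comm (i j : Fin m) : cpt2 i j = cpt2 j i := by
  funext p; simp [cpt2, Bool.or_comm]

lemma mono_false {f : (Fin m → Bool) → Bool} (hf : Positive f) {x y : Fin m → Bool}
    (h : x ≤ y) (hy : f y = false) : f x = false := by
  cases hx : f x with
  | false => rfl
  | true => rw [hf x y h hx] at hy; exact absurd hy (by simp)

lemma pt1_false {f : (Fin m → Bool) → Bool} (hf : Positive f) (hnc : ¬ Canalyzing f)
    (k : Fin m) : f (pt1 k) = false := by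
  cases h : f (pt1 k) with
  | false => rfl
  | true =>
    exfalso; apply hnc
    refine ⟨k, true, true, fun x => hf (pt1 k) _ (le_iff.2 fun p hp => ?_) h⟩
    simp only [pt1, beq_iff_eq] at hp
    subst hp
    simp [Function.update_self]

lemma cpt1_true {f : (Fin m → Bool) → Bool} (hf : Positive f) (hnc : ¬ Canalyzing f)
    (k : Fin m) : f (cpt1 k) = true := by
  cases h : f (cpt1 k) with
  | true => rfl
  | false =>
    exfalso; apply hnc
    refine ⟨k, false, false, fun x => mono_false hf (le_iff.2 fun p hp => ?_) h⟩
    simp only [cpt1, Bool.not_eq_true', beq_eq_false_iff_ne, ne_eq]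
    intro hpk
    subst hpk
    rw [Function.update_self] at hp
    exact absurd hp (by simp)

lemma insert_update {n : ℕ} (i : Fin (n + 1)) (y : Fin (n + 1) → Bool) (b0 : Bool)
    (hy : y i = b0) (j' : Fin n) (b : Bool) :
    i.insertNth b0 (Function.update (i.removeNth y) j' b)
      = Function.update y (i.succAbove j') b := by
  funext p
  rcases eq_or_ne p i with rfl | hpi
  · rw [Fin.insertNth_apply_same, Function.update_of_ne (Fin.succAbove_ne p j').symm, hy]
  · obtain ⟨k, rfl⟩ := Fin.exists_succAbove_eq hpi
    rw [Fin.insertNth_apply_succAbove]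
    rcases eq_or_ne k j' with rfl | hk
    · rw [Function.update_self, Function.update_self]
    · rw [Function.update_of_ne hk, Function.update_of_ne
        (fun h => hk (Fin.succAbove_right_injective h))]
      rfl

section Main

variable {n : ℕ} {f : (Fin (n + 1) → Bool) → Bool}

/-- For every `i` there is `j ≠ i` with `f` true on the pair `{i,j}`. -/
lemma key_true (hf : Positive f) (hnc : ¬ Canalyzing f)
    (hres : ∀ (i : Fin (n + 1)) (b : Bool), Canalyzing (restrict f i b))
    (i : Fin (n + 1)) : ∃ j, j ≠ i ∧ f (pt2 i j) = true := by
  obtain ⟨j', b, c, hc⟩ := hres i true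
  set j := i.succAbove j' with hj
  have hji : j ≠ i := Fin.succAbove_ne i j'
  have key : ∀ y : Fin (n + 1) → Bool, y i = true → f (Function.update y j b) = c := by
    intro y hy
    have h2 := hc (i.removeNth y)
    simp only [restrict] at h2
    rwa [insert_update i y true hy j' b] at h2
  cases b with
  | false =>
    cases c with
    | false =>
      exfalso; apply hnc
      refine ⟨j, false, false, fun x => ?_⟩
      have h1 := key (Function.update x i true) (by rw [Function.update_self])
      refine mono_false hf (le_iff.2 fun p hp => ?_) h1
      rcases eq_or_ne p j with rfl | hpj
      · rw [Function.update_self] at hp; exact absurd hp (by simp)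
      · rw [Function.update_of_ne hpj] at hp
        rw [Function.update_of_ne hpj]
        rcases eq_or_ne p i with rfl | hpi
        · rw [Function.update_self]
        · rwa [Function.update_of_ne hpi]
    | true =>
      exfalso; apply hnc
      refine ⟨i, true, true, fun x => ?_⟩
      have h1 := key (Function.update x i true) (by rw [Function.update_self])
      refine hf _ _ (le_iff.2 fun p hp => ?_) h1
      rcases eq_or_ne p j with rfl | hpj
      · rw [Function.update_self] at hp; exact absurd hp (by simp)
      · rwa [Function.update_of_ne hpj] at hp
  | true =>
    cases c with
    | false =>
      exfalso; apply hnc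
      refine ⟨i, true, false, fun x => ?_⟩
      have h1 := key (Function.update x i true) (by rw [Function.update_self])
      refine mono_false hf (le_iff.2 fun p hp => ?_) h1
      rcases eq_or_ne p j with rfl | hpj
      · rw [Function.update_self]
      · rwa [Function.update_of_ne hpj]
    | true =>
      refine ⟨j, hji, ?_⟩
      have h1 := key (pt1 i) (by simp [pt1])
      have he : Function.update (pt1 i) j true = pt2 i j := by
        funext p
        rcases eq_or_ne p j with rfl | hpj
        · simp [pt2, Function.update_self]
        · rw [Function.update_of_ne hpj]
          simp [pt1, pt2, hpj]
      rwa [he] at h1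

/-- For every `i` there is `j ≠ i` with `f` false on the complement of `{i,j}`. -/
lemma key_false (hf : Positive f) (hnc : ¬ Canalyzing f)
    (hres : ∀ (i : Fin (n + 1)) (b : Bool), Canalyzing (restrict f i b))
    (i : Fin (n + 1)) : ∃ j, j ≠ i ∧ f (cpt2 i j) = false := by
  obtain ⟨j', b, c, hc⟩ := hres i false
  set j := i.succAbove j' with hj
  have hji : j ≠ i := Fin.succAbove_ne i j'
  have key : ∀ y : Fin (n + 1) → Bool, y i = false → f (Function.update y j b) = c := by
    intro y hy
    have h2 := hc (i.removeNth y)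
    simp only [restrict] at h2
    rwa [insert_update i y false hy j' b] at h2
  cases b with
  | true =>
    cases c with
    | true =>
      exfalso; apply hnc
      refine ⟨j, true, true, fun x => ?_⟩
      have h1 := key (Function.update x i false) (by rw [Function.update_self])
      refine hf _ _ (le_iff.2 fun p hp => ?_) h1
      rcases eq_or_ne p j with rfl | hpj
      · rw [Function.update_self]
      · rw [Function.update_of_ne hpj] at hp
        rw [Function.update_of_ne hpj]
        rcases eq_or_ne p i with rfl | hpi
        · rw [Function.update_self] at hp; exact absurd hp (by simp)
        · rwa [Function.update_of_ne hpi] at hp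
    | false =>
      exfalso; apply hnc
      refine ⟨i, false, false, fun x => ?_⟩
      have h1 := key (Function.update x i false) (by rw [Function.update_self])
      refine mono_false hf (le_iff.2 fun p hp => ?_) h1
      rcases eq_or_ne p j with rfl | hpj
      · rw [Function.update_self]
      · rwa [Function.update_of_ne hpj]
  | false =>
    cases c with
    | true =>
      exfalso; apply hnc
      refine ⟨i, false, true, fun x => ?_⟩
      have h1 := key (Function.update x i false) (by rw [Function.update_self])
      refine hf _ _ (le_iff.2 fun p hp => ?_) h1
      rcases eq_or_ne p j with rfl | hpj
      · rw [Function.update_self] at hp; exact absurd hp (by simp)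
      · rwa [Function.update_of_ne hpj] at hp
    | false =>
      refine ⟨j, hji, ?_⟩
      have h1 := key (cpt1 i) (by simp [cpt1])
      have he : Function.update (cpt1 i) j false = cpt2 i j := by
        funext p
        rcases eq_or_ne p j with rfl | hpj
        · simp [cpt2, Function.update_self]
        · rw [Function.update_of_ne hpj]
          simp [cpt1, cpt2, hpj]
      rwa [he] at h1

/-- Cross-intersecting: a true pair and a false complemented pair must meet. -/
lemma cross (hf : Positive f) {i j k l : Fin (n + 1)}
    (hik : i ≠ k) (hil : i ≠ l) (hjk : j ≠ k) (hjl : j ≠ l)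
    (hG : f (pt2 i j) = true) (hH : f (cpt2 k l) = false) : False := by
  have hle : pt2 i j ≤ cpt2 k l := by
    refine le_iff.2 fun p hp => ?_
    simp only [pt2, Bool.or_eq_true, beq_iff_eq] at hp
    simp only [cpt2, Bool.not_eq_true', Bool.or_eq_false_iff, beq_eq_false_iff_ne, ne_eq,
      Bool.not_eq_false', Bool.or_eq_true]
    rcases hp with rfl | rfl
    · simp [hik, hil]
    · simp [hjk, hjl]
  rw [hf _ _ hle hG] at hH
  exact absurd hH (by simp)

lemma card_four (hn : n + 1 ≠ 4) {a b c d : Fin (n + 1)}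
    (hab : a ≠ b) (hcd : c ≠ d) (hac : a ≠ c) (had : a ≠ d) (hbc : b ≠ c) (hbd : b ≠ d)
    (hv : ∀ v : Fin (n + 1), v = a ∨ v = b ∨ v = c ∨ v = d) : False := by
  have hsub : (Finset.univ : Finset (Fin (n + 1))) ⊆ {a, b, c, d} := by
    intro v _
    simp only [Finset.mem_insert, Finset.mem_singleton]
    exact hv v
  have hcard : ({a, b, c, d} : Finset (Fin (n + 1))).card = 4 := by
    rw [Finset.card_insert_of_notMem (by simp [hab, hac, had]),
      Finset.card_insert_of_notMem (by simp [hbc, hbd]),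
      Finset.card_insert_of_notMem (by simp [hcd]), Finset.card_singleton]
  have h1 : n + 1 ≤ 4 := by
    have := Finset.card_le_card hsub
    rwa [Finset.card_univ, Fintype.card_fin, hcard] at this
  have h2 : 4 ≤ n + 1 := by
    have := Finset.card_le_card (Finset.subset_univ ({a, b, c, d} : Finset (Fin (n + 1))))
    rwa [Finset.card_univ, Fintype.card_fin, hcard] at this
  omega

/-- Two disjoint true pairs are impossible. -/
lemma fourG (hn : n + 1 ≠ 4) (hf : Positive f) (hnc : ¬ Canalyzing f)
    (hres : ∀ (i : Fin (n + 1)) (b : Bool), Canalyzing (restrict f i b))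
    {a b c d : Fin (n + 1)}
    (hab : a ≠ b) (hcd : c ≠ d) (hac : a ≠ c) (had : a ≠ d) (hbc : b ≠ c) (hbd : b ≠ d)
    (hGab : f (pt2 a b) = true) (hGcd : f (pt2 c d) = true) : False := by
  refine card_four hn hab hcd hac had hbc hbd fun v => ?_
  by_contra hv
  push_neg at hv
  obtain ⟨h1, h2, h3, h4⟩ := hv
  obtain ⟨w, hwv, hH⟩ := key_false hf hnc hres v
  have hw1 : w = a ∨ w = b := by
    by_contra hw
    push_neg at hw
    exact cross hf (Ne.symm h1) (Ne.symm hw.1) (Ne.symm h2) (Ne.symm hw.2) hGab hH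
  have hw2 : w = c ∨ w = d := by
    by_contra hw
    push_neg at hw
    exact cross hf (Ne.symm h3) (Ne.symm hw.1) (Ne.symm h4) (Ne.symm hw.2) hGcd hH
  rcases hw1 with rfl | rfl <;> rcases hw2 with h | h
  · exact hac h
  · exact had h
  · exact hbc h
  · exact hbd h

/-- Two disjoint false complemented pairs are impossible. -/
lemma fourH (hn : n + 1 ≠ 4) (hf : Positive f) (hnc : ¬ Canalyzing f)
    (hres : ∀ (i : Fin (n + 1)) (b : Bool), Canalyzing (restrict f i b))
    {a b c d : Fin (n + 1)}
    (hab : a ≠ b) (hcd : c ≠ d) (hac : a ≠ c) (had : a ≠ d) (hbc : b ≠ c) (hbd : b ≠ d)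
    (hHab : f (cpt2 a b) = false) (hHcd : f (cpt2 c d) = false) : False := by
  refine card_four hn hab hcd hac had hbc hbd fun v => ?_
  by_contra hv
  push_neg at hv
  obtain ⟨h1, h2, h3, h4⟩ := hv
  obtain ⟨w, hwv, hG⟩ := key_true hf hnc hres v
  have hw1 : w = a ∨ w = b := by
    by_contra hw
    push_neg at hw
    exact cross hf h1 h2 hw.1 hw.2 hG hHab
  have hw2 : w = c ∨ w = d := by
    by_contra hw
    push_neg at hw
    exact cross hf h3 h4 hw.1 hw.2 hG hHcd
  rcases hw1 with rfl | rfl <;> rcases hw2 with h | h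
  · exact hac h
  · exact had h
  · exact hbc h
  · exact hbd h

end Main

end AuxMinOne

open AuxMinOne in
theorem minimal_one_with_complementary_maximal_zero {n : ℕ}
    (f : (Fin (n + 1) → Bool) → Bool)
    (hn : n + 1 ≠ 4)
    (hf : Positive f) (hnc : ¬ Canalyzing f)
    (hres : ∀ (i : Fin (n + 1)) (b : Bool), Canalyzing (restrict f i b)) :
    ∃ y : Fin (n + 1) → Bool,
      {j : Fin (n + 1) | y j = true}.ncard = 2 ∧
      MinOne f y ∧ MaxZero f (fun j => ! y j) := by
  have hex : ∃ i j : Fin (n + 1), i ≠ j ∧ f (pt2 i j) = true ∧ f (cpt2 i j) = false := by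
    by_contra hmain
    push_neg at hmain
    obtain ⟨b, hba, hGab⟩ := key_true hf hnc hres (0 : Fin (n + 1))
    obtain ⟨c, hca, hHac⟩ := key_false hf hnc hres (0 : Fin (n + 1))
    have hcb : c ≠ b := by
      rintro rfl
      exact absurd hHac (hmain 0 c (Ne.symm hca) hGab)
    obtain ⟨d, hdb, hHbd⟩ := key_false hf hnc hres b
    have hda : d ≠ 0 := by
      rintro rfl
      rw [cpt2_comm] at hHbd
      exact absurd hHbd (hmain 0 b (Ne.symm hba) hGab)
    rcases eq_or_ne c d with rfl | hcd
    · -- H 0 c and H b c; look at the true pair at c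
      obtain ⟨e, hec, hGce⟩ := key_true hf hnc hres c
      rcases eq_or_ne e 0 with rfl | he0
      · rw [pt2_comm] at hGce
        exact absurd hHac (hmain 0 c (Ne.symm hca) hGce)
      rcases eq_or_ne e b with rfl | heb
      · rw [pt2_comm] at hGce
        exact absurd hHbd (hmain e c hec hGce)
      · exact fourG hn hf hnc hres (Ne.symm hba) (Ne.symm hec) (Ne.symm hca)
          (Ne.symm he0) (Ne.symm hcb) (Ne.symm heb) hGab hGce
    · exact fourH hn hf hnc hres (Ne.symm hca) (Ne.symm hdb) (Ne.symm hba)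
        (Ne.symm hda) hcb hcd hHac hHbd
  obtain ⟨i, j, hij, hG, hH⟩ := hex
  have hyi : pt2 i j i = true := by simp [pt2]
  have hyj : pt2 i j j = true := by simp [pt2]
  refine ⟨pt2 i j, ?_, ⟨hG, ?_⟩, ?_, ?_⟩
  · have hset : {p : Fin (n + 1) | pt2 i j p = true} = {i, j} := by
      ext p; simp [pt2]
    rw [hset, Set.ncard_pair hij]
  · -- minimality
    intro z hz hne
    have hzle := le_iff.1 hz
    by_cases hzi : z i = true
    · by_cases hzj : z j = true
      · exfalso
        apply hne
        funext p
        cases hzp : z p with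
        | true => rw [hzle p hzp]
        | false =>
          rcases eq_or_ne p i with rfl | hpi
          · rw [hzp] at hzi; exact absurd hzi (by simp)
          rcases eq_or_ne p j with rfl | hpj
          · rw [hzp] at hzj; exact absurd hzj (by simp)
          · simp [pt2, hpi, hpj]
      · -- z j = false, so z ≤ pt1 i
        refine mono_false hf (le_iff.2 fun p hp => ?_) (pt1_false hf hnc i)
        have := hzle p hp
        simp only [pt2, Bool.or_eq_true, beq_iff_eq] at this
        rcases this with rfl | rfl
        · simp [pt1]
        · exact absurd hp hzj
    · refine mono_false hf (le_iff.2 fun p hp => ?_) (pt1_false hf hnc j)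
      have := hzle p hp
      simp only [pt2, Bool.or_eq_true, beq_iff_eq] at this
      rcases this with rfl | rfl
      · exact absurd hp hzi
      · simp [pt1]
  · -- f (¬y) = false
    show f (fun p => !(pt2 i j p)) = false
    exact hH
  · -- maximality
    intro z hz hne
    have hzge := le_iff.1 hz
    by_cases hzi : z i = true
    · refine hf (cpt1 j) z (le_iff.2 fun p hp => ?_) (cpt1_true hf hnc j)
      simp only [cpt1, Bool.not_eq_true', beq_eq_false_iff_ne, ne_eq] at hp
      rcases eq_or_ne p i with rfl | hpi
      · exact hzi
      · refine hzge p ?_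
        simp [pt2, hpi, hp]
    · by_cases hzj : z j = true
      · refine hf (cpt1 i) z (le_iff.2 fun p hp => ?_) (cpt1_true hf hnc i)
        simp only [cpt1, Bool.not_eq_true', beq_eq_false_iff_ne, ne_eq] at hp
        rcases eq_or_ne p j with rfl | hpj
        · exact hzj
        · refine hzge p ?_
          simp [pt2, hp, hpj]
      · exfalso
        apply hne
        have hzi' : z i = false := by simpa using hzi
        have hzj' : z j = false := by simpa using hzj
        funext p
        show z p = !(pt2 i j p)
        rcases eq_or_ne p i with rfl | hpi
        · rw [hzi', hyi]; rfl
        rcases eq_or_ne p j with rfl | hpj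
        · rw [hzj', hyj]; rfl
        · have h2 : (!(pt2 i j p)) = true := by simp [pt2, hpi, hpj]
          rw [h2]
          exact hzge p h2
end

section
/- Let f be a positive non-canalyzing Boolean function on {0,1}^n such that for each variable both of its restrictions are canalyzing, and suppose y is a minimal one of f of Hamming weight 2 with 1's in coordinates i and s and with the complement of y a maximal zero of f. Then if a point a in {0,1}^{n-1} is an extremal point of f|_{x_i=α} (α ∈ {0,1}), the point obtained from a by inserting α in coordinate i is an extremal point of f. -/
lemma mono_false {n : ℕ} {f : (Fin n → Bool) → Bool} (hf : Positive f)
    {x y : Fin n → Bool} (h : x ≤ y) (hy : f y = false) : f x = false := by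
  cases hx : f x with
  | false => rfl
  | true => have := hf x y h hx; simp [this] at hy

theorem extremal_of_restriction_extremal {n : ℕ} (f : (Fin (n + 1) → Bool) → Bool)
    (hf : Positive f) (hnc : ¬ Canalyzing f)
    (hres : ∀ (j : Fin (n + 1)) (b : Bool), Canalyzing (restrict f j b))
    (i s : Fin (n + 1)) (his : i ≠ s)
    (y : Fin (n + 1) → Bool) (hy : y = fun j => decide (j = i ∨ j = s))
    (hy1 : MinOne f y) (hy0 : MaxZero f (fun j => ! y j)) :
    ∀ (α : Bool) (a : Fin n → Bool),
      (MinOne (restrict f i α) a ∨ MaxZero (restrict f i α) a) →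
      (MinOne f (i.insertNth α a) ∨ MaxZero f (i.insertNth α a)) := by
  subst hy
  obtain ⟨s', hs'⟩ := Fin.exists_succAbove_eq his.symm
  -- f is true whenever coordinates i and s are true
  have f1 : ∀ x : Fin (n+1) → Bool, x i = true → x s = true → f x = true := by
    intro x hxi hxs
    refine hf _ x ?_ hy1.1
    intro j
    by_cases hji : j = i
    · subst hji; simp [hxi]
    · by_cases hjs : j = s
      · subst hjs; simp [hxs]
      · simp [hji, hjs]
  -- f is false whenever coordinates i and s are false
  have f0 : ∀ x : Fin (n+1) → Bool, x i = false → x s = false → f x = false := by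
    intro x hxi hxs
    refine mono_false hf ?_ hy0.1
    intro j
    by_cases hji : j = i
    · subst hji; simp [hxi]
    · by_cases hjs : j = s
      · subst hjs; simp [hxs]
      · simp [hji, hjs]
  -- f (e_s) = false
  have fes : f (fun j => decide (j = s)) = false := by
    refine hy1.2 _ ?_ ?_
    · intro j
      by_cases hjs : j = s
      · simp [hjs]
      · simp [hjs]
    · intro h
      have := congrFun h i
      simp at this
      exact his this
  -- f (all ones except s) = true
  have fts : f (fun j => !decide (j = s)) = true := by
    refine hy0.2 _ ?_ ?_
    · intro j
      by_cases hjs : j = s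
      · simp [hjs]
      · simp [hjs]
    · intro h
      have := congrFun h i
      simp at this
      exact his this
  intro α a hext
  rcases hext with ha | ha
  · -- MinOne case
    left
    cases α with
    | false =>
      constructor
      · exact ha.1
      · intro z hz hzne
        have hzi : z i = false := by
          have := hz i
          rw [Fin.insertNth_apply_same] at this
          cases h2 : z i with
          | false => rfl
          | true => rw [h2] at this; exact absurd this (by simp [Bool.le_iff_imp])
        have hz' : i.removeNth z ≤ a := by
          intro j
          have := hz (i.succAbove j)
          rwa [Fin.insertNth_apply_succAbove] at this
        have hzeq : z = i.insertNth false (i.removeNth z) := by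
          rw [← hzi, Fin.insertNth_self_removeNth]
        rw [hzeq]
        refine ha.2 _ hz' ?_
        intro h
        apply hzne
        rw [hzeq, h]
    | true =>
      -- key: f (i.insertNth false a) = false
      have key : f (i.insertNth false a) = false := by
        by_contra hk
        rw [Bool.not_eq_false] at hk
        -- then a s' must be true
        have has' : a s' = true := by
          by_contra h
          rw [Bool.not_eq_true] at h
          have : f (i.insertNth false a) = false := by
            refine f0 _ ?_ ?_
            · rw [Fin.insertNth_apply_same]
            · rw [← hs', Fin.insertNth_apply_succAbove, h]
          simp [this] at hk
        -- indicator of s' is ≤ a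
        have hle : (fun j => decide (j = s')) ≤ a := by
          intro j
          by_cases hjs : j = s'
          · simp [hjs, has']
          · simp [hjs]
        by_cases heq : (fun j => decide (j = s')) = a
        · -- a is the indicator of s', so insertNth false a = e_s
          have : i.insertNth false a = fun j => decide (j = s) := by
            rw [← heq]
            funext j
            refine i.succAboveCases ?_ ?_ j
            · simp [Fin.insertNth_apply_same, his]
            · intro k
              rw [Fin.insertNth_apply_succAbove, ← hs']
              simp [Fin.succAbove_right_injective.eq_iff]
          rw [this, fes] at hk
          simp at hk
        · -- otherwise minimality of a in restrict f i true is violated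
          have := ha.2 _ hle heq
          unfold restrict at this
          have hyeq : i.insertNth true (fun j => decide (j = s')) =
              (fun j => decide (j = i ∨ j = s)) := by
            funext j
            refine i.succAboveCases ?_ ?_ j
            · simp [Fin.insertNth_apply_same]
            · intro k
              rw [Fin.insertNth_apply_succAbove, ← hs']
              simp [Fin.succAbove_right_injective.eq_iff, Fin.succAbove_ne]
          rw [hyeq, hy1.1] at this
          simp at this
      constructor
      · exact ha.1
      · intro z hz hzne
        have hz' : i.removeNth z ≤ a := by
          intro j
          have := hz (i.succAbove j)
          rwa [Fin.insertNth_apply_succAbove] at this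
        have hzeq : z = i.insertNth (z i) (i.removeNth z) :=
          (Fin.insertNth_self_removeNth i z).symm
        cases hzi : z i with
        | false =>
          refine mono_false hf ?_ key
          rw [hzeq, hzi]
          intro j
          refine i.succAboveCases ?_ ?_ j
          · simp [Fin.insertNth_apply_same]
          · intro k
            rw [Fin.insertNth_apply_succAbove, Fin.insertNth_apply_succAbove]
            exact hz' k
        | true =>
          have hne' : i.removeNth z ≠ a := by
            intro h
            apply hzne
            rw [hzeq, hzi, h]
          have := ha.2 _ hz' hne'
          unfold restrict at this
          rw [hzeq, hzi]
          exact this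
  · -- MaxZero case
    right
    cases α with
    | true =>
      constructor
      · exact ha.1
      · intro z hz hzne
        have hzi : z i = true := by
          have := hz i
          rw [Fin.insertNth_apply_same] at this
          exact Bool.eq_true_of_true_le this
        have hz' : a ≤ i.removeNth z := by
          intro j
          have := hz (i.succAbove j)
          rwa [Fin.insertNth_apply_succAbove] at this
        have hzeq : z = i.insertNth true (i.removeNth z) := by
          rw [← hzi, Fin.insertNth_self_removeNth]
        have hne' : i.removeNth z ≠ a := by
          intro h
          apply hzne
          rw [hzeq, h]
        have := ha.2 _ hz' hne'
        unfold restrict at this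
        rw [hzeq]
        exact this
    | false =>
      -- key: f (i.insertNth true a) = true
      have key : f (i.insertNth true a) = true := by
        by_contra hk
        rw [Bool.not_eq_true] at hk
        have has' : a s' = false := by
          by_contra h
          rw [Bool.not_eq_false] at h
          have : f (i.insertNth true a) = true := by
            refine f1 _ ?_ ?_
            · rw [Fin.insertNth_apply_same]
            · rw [← hs', Fin.insertNth_apply_succAbove, h]
          simp [this] at hk
        have hle : a ≤ (fun j => !decide (j = s')) := by
          intro j
          by_cases hjs : j = s'
          · simp [hjs, has']
          · simp [hjs]
        by_cases heq : (fun j => !decide (j = s')) = a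
        · have : i.insertNth true a = fun j => !decide (j = s) := by
            rw [← heq]
            funext j
            refine i.succAboveCases ?_ ?_ j
            · simp [Fin.insertNth_apply_same, his]
            · intro k
              rw [Fin.insertNth_apply_succAbove, ← hs']
              simp [Fin.succAbove_right_injective.eq_iff]
          rw [this, fts] at hk
          simp at hk
        · have := ha.2 _ hle heq
          unfold restrict at this
          have hzeq : i.insertNth false (fun j => !decide (j = s')) =
              (fun j => !(decide (j = i ∨ j = s))) := by
            funext j
            refine i.succAboveCases ?_ ?_ j
            · simp [Fin.insertNth_apply_same]
            · intro k
              rw [Fin.insertNth_apply_succAbove, ← hs']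
              simp [Fin.succAbove_right_injective.eq_iff, Fin.succAbove_ne]
          rw [hzeq, hy0.1] at this
          simp at this
      constructor
      · exact ha.1
      · intro z hz hzne
        have hz' : a ≤ i.removeNth z := by
          intro j
          have := hz (i.succAbove j)
          rwa [Fin.insertNth_apply_succAbove] at this
        have hzeq : z = i.insertNth (z i) (i.removeNth z) :=
          (Fin.insertNth_self_removeNth i z).symm
        cases hzi : z i with
        | true =>
          refine hf _ _ ?_ key
          rw [hzeq, hzi]
          intro j
          refine i.succAboveCases ?_ ?_ j
          · simp [Fin.insertNth_apply_same]
          · intro k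
            rw [Fin.insertNth_apply_succAbove, Fin.insertNth_apply_succAbove]
            exact hz' k
        | false =>
          have hne' : i.removeNth z ≠ a := by
            intro h
            apply hzne
            rw [hzeq, hzi, h]
          have := ha.2 _ hz' hne'
          unfold restrict at this
          rw [hzeq, hzi]
          exact this
end

section
/- Let f be a positive non-canalyzing Boolean function on {0,1}^n with k relevant variables such that for each variable both restrictions f|_{x_i=0}, f|_{x_i=1} are canalyzing. Then f has at least n+2 extremal points. -/
namespace ExtremalAux

def chi {m : ℕ} (S : Finset (Fin m)) : Fin m → Bool := fun j => decide (j ∈ S)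

lemma chi_mem {m : ℕ} {S : Finset (Fin m)} {j : Fin m} (h : j ∈ S) : chi S j = true := by
  simp [chi, h]

lemma chi_not_mem {m : ℕ} {S : Finset (Fin m)} {j : Fin m} (h : j ∉ S) : chi S j = false := by
  simp [chi, h]

lemma chi_inj {m : ℕ} : Function.Injective (chi (m := m)) := by
  intro S T h
  ext j
  have := congrFun h j
  simpa [chi, decide_eq_decide] using this

lemma bool_le_false {x : Bool} (h : x ≤ false) : x = false := by
  cases x
  · rfl
  · exact absurd h (by decide)

lemma bool_true_le {x : Bool} (h : true ≤ x) : x = true := by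
  cases x
  · exact absurd h (by decide)
  · rfl

lemma le_chi_iff {m : ℕ} {z : Fin m → Bool} {S : Finset (Fin m)} :
    z ≤ chi S ↔ ∀ j ∉ S, z j = false := by
  constructor
  · intro h j hj
    have h2 := h j
    rw [chi_not_mem hj] at h2
    exact bool_le_false h2
  · intro h j
    by_cases hj : j ∈ S
    · rw [chi_mem hj]; exact Bool.le_true _
    · rw [h j hj]; exact Bool.false_le _
    
lemma chi_le_iff {m : ℕ} {z : Fin m → Bool} {S : Finset (Fin m)} :
    chi S ≤ z ↔ ∀ j ∈ S, z j = true := by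
  constructor
  · intro h j hj
    have h2 := h j
    rw [chi_mem hj] at h2
    exact bool_true_le h2
  · intro h j
    by_cases hj : j ∈ S
    · rw [chi_mem hj, h j hj]
    · rw [chi_not_mem hj]; exact Bool.false_le _

lemma pair_min {m : ℕ} {f : (Fin m → Bool) → Bool}
    (hposc : ∀ {x y : Fin m → Bool}, x ≤ y → f y = false → f x = false)
    (hsing : ∀ k, f (chi {k}) = false) {i j : Fin m} (hij : i ≠ j)
    (ht : f (chi {i, j}) = true) : MinOne f (chi {i, j}) := by
  refine ⟨ht, fun z hz hne => ?_⟩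
  have hzk := le_chi_iff.1 hz
  by_cases hzi : z i = true
  · by_cases hzj : z j = true
    · exfalso; apply hne; funext p
      by_cases hp : p ∈ ({i, j} : Finset (Fin m))
      · rcases Finset.mem_insert.1 hp with rfl | hp'
        · rw [hzi, chi_mem hp]
        · rw [Finset.mem_singleton] at hp'; subst hp'; rw [hzj, chi_mem hp]
      · rw [hzk p hp, chi_not_mem hp]
    · refine hposc ?_ (hsing i)
      rw [le_chi_iff]
      intro p hp
      rw [Finset.mem_singleton] at hp
      by_cases hpj : p = j
      · subst hpj; simp only [Bool.not_eq_true] at hzj; exact hzj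
      · exact hzk p (by simp [hp, hpj])
  · refine hposc ?_ (hsing j)
    rw [le_chi_iff]
    intro p hp
    rw [Finset.mem_singleton] at hp
    by_cases hpi : p = i
    · subst hpi; simp only [Bool.not_eq_true] at hzi; exact hzi
    · exact hzk p (by simp [hp, hpi])

lemma copair_max {m : ℕ} {f : (Fin m → Bool) → Bool} (hf : Positive f)
    (hcosing : ∀ k, f (chi ({k}ᶜ)) = true) {i j : Fin m} (hij : i ≠ j)
    (hfa : f (chi (({i, j} : Finset (Fin m))ᶜ)) = false) :
    MaxZero f (chi (({i, j} : Finset (Fin m))ᶜ)) := by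
  refine ⟨hfa, fun z hz hne => ?_⟩
  have hzk := chi_le_iff.1 hz
  by_cases hzi : z i = true
  · refine hf _ _ ?_ (hcosing j)
    rw [chi_le_iff]
    intro p hp
    rw [Finset.mem_compl, Finset.mem_singleton] at hp
    by_cases hpi : p = i
    · subst hpi; exact hzi
    · exact hzk p (by simp [hpi, hp])
  · by_cases hzj : z j = true
    · refine hf _ _ ?_ (hcosing i)
      rw [chi_le_iff]
      intro p hp
      rw [Finset.mem_compl, Finset.mem_singleton] at hp
      by_cases hpj : p = j
      · subst hpj; exact hzj
      · exact hzk p (by simp [hp, hpj])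
    · exfalso; apply hne; funext p
      by_cases hp : p ∈ ({i, j} : Finset (Fin m))
      · have hp2 : p ∉ (({i, j} : Finset (Fin m))ᶜ) := fun hc => (Finset.mem_compl.1 hc) hp
        rw [chi_not_mem hp2]
        rcases Finset.mem_insert.1 hp with rfl | hp'
        · simp only [Bool.not_eq_true] at hzi; exact hzi
        · rw [Finset.mem_singleton] at hp'; subst hp'
          simp only [Bool.not_eq_true] at hzj; exact hzj
      · rw [hzk p (Finset.mem_compl.2 hp), chi_mem (Finset.mem_compl.2 hp)]

lemma card_le_ncard {m : ℕ} (f : (Fin m → Bool) → Bool) (S : Finset (Fin m → Bool))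
    (h : ∀ y ∈ S, MinOne f y ∨ MaxZero f y) :
    S.card ≤ {y : Fin m → Bool | MinOne f y ∨ MaxZero f y}.ncard := by
  rw [← Set.ncard_coe_finset]
  exact Set.ncard_le_ncard (fun y hy => h y (by simpa using hy)) (Set.toFinite _)

end ExtremalAux

open ExtremalAux in
theorem extremal_count_non_canalyzing_with_canalyzing_restrictions {n : ℕ}
    (f : (Fin (n + 1) → Bool) → Bool)
    (hf : Positive f) (hnc : ¬ Canalyzing f)
    (hres : ∀ (i : Fin (n + 1)) (b : Bool), Canalyzing (restrict f i b)) :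
    (n + 1) + 2 ≤ {y : Fin (n + 1) → Bool | MinOne f y ∨ MaxZero f y}.ncard := by
  have hposc : ∀ {x y : Fin (n+1) → Bool}, x ≤ y → f y = false → f x = false := by
    intro x y hxy hy
    cases hfx : f x
    · rfl
    · rw [hf x y hxy hfx] at hy; exact hy
  have hbot : f (chi (∅ : Finset (Fin (n+1)))) = false := by
    by_contra h
    rw [Bool.not_eq_false] at h
    refine hnc ⟨0, true, true, fun x => hf _ _ (fun j => ?_) h⟩
    rw [chi_not_mem (Finset.notMem_empty j)]
    exact Bool.false_le _
  have htop : f (chi (Finset.univ : Finset (Fin (n+1)))) = true := by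
    by_contra h
    rw [Bool.not_eq_true] at h
    refine hnc ⟨0, true, false, fun x => hposc (fun j => ?_) h⟩
    rw [chi_mem (Finset.mem_univ j)]
    exact Bool.le_true _
  have hsing : ∀ i : Fin (n+1), f (chi {i}) = false := by
    intro i
    by_contra h
    rw [Bool.not_eq_false] at h
    refine hnc ⟨i, true, true, fun x => hf _ _ (fun j => ?_) h⟩
    by_cases hj : j = i
    · subst hj; rw [Function.update_self]; exact Bool.le_true _
    · rw [chi_not_mem (by simp [hj])]; exact Bool.false_le _
  have hcosing : ∀ i : Fin (n+1), f (chi ({i}ᶜ)) = true := by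
    intro i
    by_contra h
    rw [Bool.not_eq_true] at h
    refine hnc ⟨i, false, false, fun x => hposc (fun j => ?_) h⟩
    by_cases hj : j = i
    · subst hj; rw [Function.update_self]; exact Bool.false_le _
    · rw [chi_mem (by simp [hj])]; exact Bool.le_true _
  have key : ∀ (i : Fin (n+1)) (b : Bool), ∃ j, j ≠ i ∧ ∃ bb c : Bool,
      ∀ y : Fin (n+1) → Bool, y i = b → y j = bb → f y = c := by
    intro i b
    obtain ⟨j', bb, c, h⟩ := hres i b
    refine ⟨i.succAbove j', Fin.succAbove_ne i j', bb, c, fun y hyi hyj => ?_⟩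
    have h2 := h (i.removeNth y)
    simp only [restrict] at h2
    have e1 : Function.update (i.removeNth y) j' bb = i.removeNth y := by
      funext k
      rcases eq_or_ne k j' with rfl | hk
      · rw [Function.update_self]; exact hyj.symm
      · rw [Function.update_of_ne hk]
    rw [e1] at h2
    have e2 : i.insertNth b (i.removeNth y) = y := by
      rw [Fin.insertNth_eq_iff]
      exact ⟨hyi.symm, rfl⟩
    rw [e2] at h2
    exact h2
  have hG : ∀ i : Fin (n+1), ∃ j, j ≠ i ∧ f (chi {i, j}) = true := by
    intro i
    obtain ⟨j, hji, bb, c, h⟩ := key i true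
    refine ⟨j, hji, ?_⟩
    cases bb <;> cases c
    · -- bb = false, c = false : apply h at chi ({j}ᶜ), contradict hcosing j
      exact absurd (h (chi ({j}ᶜ)) (chi_mem (by simp [hji.symm]))
        (chi_not_mem (by simp))) (by simp [hcosing j])
    · -- bb = false, c = true : apply h at chi {i}, contradict hsing i
      exact absurd (h (chi {i}) (chi_mem (by simp)) (chi_not_mem (by simp [hji])))
        (by simp [hsing i])
    · -- bb = true, c = false : apply h at chi univ, contradict htop
      exact absurd (h (chi Finset.univ) (chi_mem (by simp)) (chi_mem (by simp)))
        (by simp [htop])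
    · exact h (chi {i, j}) (chi_mem (by simp)) (chi_mem (by simp))
  have hH : ∀ i : Fin (n+1), ∃ j, j ≠ i ∧ f (chi (({i, j} : Finset (Fin (n+1)))ᶜ)) = false := by
    intro i
    obtain ⟨j, hji, bb, c, h⟩ := key i false
    refine ⟨j, hji, ?_⟩
    cases bb <;> cases c
    · exact h (chi ({i, j}ᶜ)) (chi_not_mem (by simp)) (chi_not_mem (by simp))
    · -- bb = false, c = true : apply h at chi ∅, contradict hbot
      exact absurd (h (chi ∅) (chi_not_mem (by simp)) (chi_not_mem (by simp)))
        (by simp [hbot])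
    · -- bb = true, c = false : apply h at chi ({i}ᶜ), contradict hcosing i
      exact absurd (h (chi ({i}ᶜ)) (chi_not_mem (by simp)) (chi_mem (by simp [hji])))
        (by simp [hcosing i])
    · -- bb = true, c = true : apply h at chi {j}, contradict hsing j
      exact absurd (h (chi {j}) (chi_not_mem (by simp [hji.symm])) (chi_mem (by simp)))
        (by simp [hsing j])
  have meet : ∀ {i j k l : Fin (n+1)}, f (chi {i, j}) = true →
      f (chi (({k, l} : Finset (Fin (n+1)))ᶜ)) = false → i = k ∨ i = l ∨ j = k ∨ j = l := by
    intro i j k l h1 h2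
    by_contra hcon
    push_neg at hcon
    obtain ⟨h3, h4, h5, h6⟩ := hcon
    have hle : chi ({i, j} : Finset (Fin (n+1))) ≤ chi (({k, l} : Finset (Fin (n+1)))ᶜ) := by
      rw [chi_le_iff]
      intro p hp
      refine chi_mem (Finset.mem_compl.2 ?_)
      rcases Finset.mem_insert.1 hp with rfl | hp'
      · simp [h3, h4]
      · rw [Finset.mem_singleton] at hp'; subst hp'; simp [h5, h6]
    rw [hf _ _ hle h1] at h2
    exact absurd h2 (by simp)
  clear hres hnc key
  rcases n with _ | (_ | (_ | (_ | nn)))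
  · -- n = 0 : contradiction
    have e : ({0} : Finset (Fin 1)) = Finset.univ := by decide
    have h2 := hsing 0
    rw [e] at h2
    exact Bool.noConfusion (htop.symm.trans h2)
  · -- n = 1 : contradiction
    have e : ({1} : Finset (Fin 2)) = ({0} : Finset (Fin 2))ᶜ := by decide
    have h2 := hsing 1
    rw [e] at h2
    exact Bool.noConfusion ((hcosing 0).symm.trans h2)
  · -- n = 2
    refine le_trans ?_ (card_le_ncard f
      (((Finset.univ.powersetCard 1 ∪ Finset.univ.powersetCard 2) : Finset (Finset (Fin 3))).image chi) ?_)
    · rw [Finset.card_image_of_injective _ chi_inj]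
      decide
    · intro y hy
      rw [Finset.mem_image] at hy
      obtain ⟨s, hs, rfl⟩ := hy
      rcases Finset.mem_union.1 hs with hs1 | hs2
      · rw [Finset.mem_powersetCard] at hs1
        obtain ⟨i, rfl⟩ := Finset.card_eq_one.1 hs1.2
        right
        have hc2 : (({i} : Finset (Fin 3))ᶜ).card = 2 := by
          rw [Finset.card_compl, Finset.card_singleton]
          rfl
        obtain ⟨k, l, hkl, hc⟩ := Finset.card_eq_two.1 hc2
        have e : (({k, l} : Finset (Fin 3))ᶜ) = {i} := by rw [← hc, compl_compl]
        have h2 := copair_max hf hcosing hkl (by rw [e]; exact hsing i)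
        rwa [e] at h2
      · rw [Finset.mem_powersetCard] at hs2
        obtain ⟨i, j, hij, rfl⟩ := Finset.card_eq_two.1 hs2.2
        left
        refine pair_min hposc hsing hij ?_
        have hc1 : (({i, j} : Finset (Fin 3))ᶜ).card = 1 := by
          rw [Finset.card_compl, hs2.2]
          rfl
        obtain ⟨k, hk⟩ := Finset.card_eq_one.1 hc1
        have e : ({i, j} : Finset (Fin 3)) = ({k} : Finset (Fin 3))ᶜ := by
          rw [← hk, compl_compl]
        rw [e]
        exact hcosing k
  · -- n = 3
    refine le_trans ?_ (card_le_ncard f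
      ((Finset.univ.powersetCard 2 : Finset (Finset (Fin 4))).image chi) ?_)
    · rw [Finset.card_image_of_injective _ chi_inj]
      decide
    · intro y hy
      rw [Finset.mem_image] at hy
      obtain ⟨s, hs, rfl⟩ := hy
      rw [Finset.mem_powersetCard] at hs
      obtain ⟨i, j, hij, rfl⟩ := Finset.card_eq_two.1 hs.2
      by_cases hts : f (chi ({i, j} : Finset (Fin 4))) = true
      · left
        exact pair_min hposc hsing hij hts
      · right
        rw [Bool.not_eq_true] at hts
        have hc2 : (({i, j} : Finset (Fin 4))ᶜ).card = 2 := by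
          rw [Finset.card_compl, hs.2]
          rfl
        obtain ⟨k, l, hkl, hc⟩ := Finset.card_eq_two.1 hc2
        have e : (({k, l} : Finset (Fin 4))ᶜ) = ({i, j} : Finset (Fin 4)) := by
          rw [← hc, compl_compl]
        have h2 := copair_max hf hcosing hkl (by rw [e]; exact hts)
        rwa [e] at h2
  · -- n = nn + 4 : star case
    have fresh : ∀ s : Finset (Fin (nn + 4 + 1)), s.card ≤ 4 → ∃ v, v ∉ s := by
      intro s hs
      by_contra hcon
      push_neg at hcon
      have hsub : (Finset.univ : Finset (Fin (nn + 4 + 1))) ⊆ s := fun v _ => hcon v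
      have hle := Finset.card_le_card hsub
      rw [Finset.card_univ, Fintype.card_fin] at hle
      omega
    have Gmeet : ∀ {i j k l : Fin (nn + 4 + 1)}, f (chi {i, j}) = true →
        f (chi {k, l}) = true → i = k ∨ i = l ∨ j = k ∨ j = l := by
      intro i j k l h1 h2
      by_contra hc
      push_neg at hc
      obtain ⟨c1, c2, c3, c4⟩ := hc
      have hcard4 : ({i, j, k, l} : Finset (Fin (nn + 4 + 1))).card ≤ 4 := by
        have t1 := Finset.card_insert_le i ({j, k, l} : Finset (Fin (nn + 4 + 1)))
        have t2 := Finset.card_insert_le j ({k, l} : Finset (Fin (nn + 4 + 1)))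
        have t3 := Finset.card_insert_le k ({l} : Finset (Fin (nn + 4 + 1)))
        have t4 : ({l} : Finset (Fin (nn + 4 + 1))).card = 1 := Finset.card_singleton l
        omega
      obtain ⟨v, hv⟩ := fresh {i, j, k, l} hcard4
      have hne : ∀ a : Fin (nn + 4 + 1), a ∈ ({i, j, k, l} : Finset (Fin (nn + 4 + 1))) → a ≠ v :=
        fun a ha e => hv (e ▸ ha)
      obtain ⟨w, hwv, hw⟩ := hH v
      have m1 := meet h1 hw
      have m2 := meet h2 hw
      have m1' : i = w ∨ j = w := by
        rcases m1 with e | e | e | e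
        · exact absurd e (hne i (by simp))
        · exact Or.inl e
        · exact absurd e (hne j (by simp))
        · exact Or.inr e
      have m2' : k = w ∨ l = w := by
        rcases m2 with e | e | e | e
        · exact absurd e (hne k (by simp))
        · exact Or.inl e
        · exact absurd e (hne l (by simp))
        · exact Or.inr e
      rcases m1' with e1 | e1 <;> rcases m2' with e2 | e2
      · exact c1 (e1.trans e2.symm)
      · exact c2 (e1.trans e2.symm)
      · exact c3 (e1.trans e2.symm)
      · exact c4 (e1.trans e2.symm)
    have hcommon : ∃ x : Fin (nn + 4 + 1), ∀ i j : Fin (nn + 4 + 1),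
        f (chi {i, j}) = true → x = i ∨ x = j := by
      by_contra hcon
      push_neg at hcon
      obtain ⟨b, hba, hGab⟩ := hG (0 : Fin (nn + 4 + 1))
      obtain ⟨p, q, hGpq, hap, haq⟩ := hcon 0
      have hpq : p ≠ q := by
        intro h
        subst h
        rw [Finset.insert_eq_self.2 (Finset.mem_singleton_self p)] at hGpq
        exact Bool.noConfusion ((hsing p).symm.trans hGpq)
      have m := Gmeet hGab hGpq
      have hbc : ∃ c : Fin (nn + 4 + 1), c ≠ 0 ∧ c ≠ b ∧ f (chi {b, c}) = true := by
        rcases m with e | e | e | e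
        · exact absurd e hap
        · exact absurd e haq
        · -- e : b = p
          refine ⟨q, fun h => haq h.symm, fun h => hpq ((h.trans e).symm), ?_⟩
          rw [e]; exact hGpq
        · -- e : b = q
          refine ⟨p, fun h => hap h.symm, fun h => hpq (h.trans e), ?_⟩
          rw [Finset.pair_comm b p, e]; exact hGpq
      obtain ⟨c, hc0, hcb, hGbc⟩ := hbc
      obtain ⟨r, s, hGrs, hbr, hbs⟩ := hcon b
      have m1 := Gmeet hGab hGrs
      have m1' : (0 : Fin (nn + 4 + 1)) = r ∨ (0 : Fin (nn + 4 + 1)) = s := by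
        rcases m1 with e | e | e | e
        · exact Or.inl e
        · exact Or.inr e
        · exact absurd e hbr
        · exact absurd e hbs
      have m2 := Gmeet hGbc hGrs
      have m2' : c = r ∨ c = s := by
        rcases m2 with e | e | e | e
        · exact absurd e hbr
        · exact absurd e hbs
        · exact Or.inl e
        · exact Or.inr e
      have hGac : f (chi ({0, c} : Finset (Fin (nn + 4 + 1)))) = true := by
        rcases m1' with e1 | e1 <;> rcases m2' with e2 | e2
        · exact absurd (e2.trans e1.symm) hc0
        · rw [e1, e2]; exact hGrs
        · rw [e1, e2, Finset.pair_comm s r]; exact hGrs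
        · exact absurd (e2.trans e1.symm) hc0
      have hcard3 : ({0, b, c} : Finset (Fin (nn + 4 + 1))).card ≤ 4 := by
        have t1 := Finset.card_insert_le (0 : Fin (nn + 4 + 1)) ({b, c} : Finset (Fin (nn + 4 + 1)))
        have t2 := Finset.card_insert_le b ({c} : Finset (Fin (nn + 4 + 1)))
        have t3 : ({c} : Finset (Fin (nn + 4 + 1))).card = 1 := Finset.card_singleton c
        omega
      obtain ⟨v, hv⟩ := fresh {0, b, c} hcard3
      have hne : ∀ a : Fin (nn + 4 + 1), a ∈ ({0, b, c} : Finset (Fin (nn + 4 + 1))) → a ≠ v :=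
        fun a ha e => hv (e ▸ ha)
      obtain ⟨z, hzv, hGvz⟩ := hG v
      have n1 := Gmeet hGvz hGab
      have n1' : z = 0 ∨ z = b := by
        rcases n1 with e | e | e | e
        · exact absurd e.symm (hne 0 (by simp))
        · exact absurd e.symm (hne b (by simp))
        · exact Or.inl e
        · exact Or.inr e
      have n2 := Gmeet hGvz hGbc
      have n2' : z = b ∨ z = c := by
        rcases n2 with e | e | e | e
        · exact absurd e.symm (hne b (by simp))
        · exact absurd e.symm (hne c (by simp))
        · exact Or.inl e
        · exact Or.inr e
      have n3 := Gmeet hGvz hGac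
      have n3' : z = 0 ∨ z = c := by
        rcases n3 with e | e | e | e
        · exact absurd e.symm (hne 0 (by simp))
        · exact absurd e.symm (hne c (by simp))
        · exact Or.inl e
        · exact Or.inr e
      rcases n1' with e | e
      · rcases n2' with e2 | e2
        · exact hba (e2.symm.trans e)
        · exact hc0 (e2.symm.trans e)
      · rcases n3' with e3 | e3
        · exact hba (e.symm.trans e3)
        · exact hcb (e3.symm.trans e)
    obtain ⟨x, hx⟩ := hcommon
    have hstar1 : ∀ u : Fin (nn + 4 + 1), u ≠ x → f (chi {x, u}) = true := by
      intro u hu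
      obtain ⟨j, hju, hGuj⟩ := hG u
      rcases hx u j hGuj with e | e
      · exact absurd e.symm hu
      · rw [← e, Finset.pair_comm u x] at hGuj
        exact hGuj
    have hstar2 : ∀ u : Fin (nn + 4 + 1), u ≠ x →
        f (chi (({x, u} : Finset (Fin (nn + 4 + 1)))ᶜ)) = false := by
      intro u hu
      obtain ⟨w, hwu, hw⟩ := hH u
      have hxw : x = w := by
        by_contra hxw
        have hcard3 : ({x, u, w} : Finset (Fin (nn + 4 + 1))).card ≤ 4 := by
          have t1 := Finset.card_insert_le x ({u, w} : Finset (Fin (nn + 4 + 1)))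
          have t2 := Finset.card_insert_le u ({w} : Finset (Fin (nn + 4 + 1)))
          have t3 : ({w} : Finset (Fin (nn + 4 + 1))).card = 1 := Finset.card_singleton w
          omega
        obtain ⟨v, hv⟩ := fresh {x, u, w} hcard3
        have hvx : v ≠ x := fun e => hv (by rw [e]; simp)
        have hGxv := hstar1 v hvx
        rcases meet hGxv hw with e | e | e | e
        · exact hu e.symm
        · exact hxw e
        · exact hv (by rw [e]; simp)
        · exact hv (by rw [e]; simp)
      rw [← hxw, Finset.pair_comm u x] at hw
      exact hw
    -- counting
    classical
    refine le_trans ?_ (card_le_ncard f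
      ((((Finset.univ.erase x).image (fun u => ({x, u} : Finset (Fin (nn + 4 + 1))))) ∪
        ((Finset.univ.erase x).image (fun u => (({x, u} : Finset (Fin (nn + 4 + 1)))ᶜ)))).image chi) ?_)
    · rw [Finset.card_image_of_injective _ chi_inj]
      have hpaircard : ∀ u : Fin (nn + 4 + 1), u ≠ x →
          ({x, u} : Finset (Fin (nn + 4 + 1))).card = 2 := by
        intro u hu
        rw [Finset.card_insert_of_notMem (by simp [Ne.symm hu]), Finset.card_singleton]
      have hinj1 : Set.InjOn (fun u => ({x, u} : Finset (Fin (nn + 4 + 1))))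
          ↑(Finset.univ.erase x) := by
        intro u hu v hv e
        have hux : u ≠ x := Finset.ne_of_mem_erase (Finset.mem_coe.1 hu)
        have e' : ({x, u} : Finset (Fin (nn + 4 + 1))) = {x, v} := e
        have hmem : u ∈ ({x, u} : Finset (Fin (nn + 4 + 1))) := by simp
        rw [e'] at hmem
        rcases Finset.mem_insert.1 hmem with e'' | e''
        · exact absurd e'' hux
        · exact Finset.mem_singleton.1 e''
      have hinj2 : Set.InjOn (fun u => (({x, u} : Finset (Fin (nn + 4 + 1)))ᶜ))
          ↑(Finset.univ.erase x) := by
        intro u hu v hv e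
        have e0 : (({x, u} : Finset (Fin (nn + 4 + 1)))ᶜ) = (({x, v} : Finset (Fin (nn + 4 + 1)))ᶜ) := e
        have e2 : ({x, u} : Finset (Fin (nn + 4 + 1))) = {x, v} := by
          have e3 := congrArg (fun t : Finset (Fin (nn + 4 + 1)) => tᶜ) e0
          simpa [compl_compl] using e3
        exact hinj1 hu hv e2
      have hdisj : Disjoint
          ((Finset.univ.erase x).image (fun u => ({x, u} : Finset (Fin (nn + 4 + 1)))))
          ((Finset.univ.erase x).image (fun u => (({x, u} : Finset (Fin (nn + 4 + 1)))ᶜ))) := by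
        rw [Finset.disjoint_left]
        intro t h1 h2
        obtain ⟨u, hu, rfl⟩ := Finset.mem_image.1 h1
        obtain ⟨v, hv, e⟩ := Finset.mem_image.1 h2
        have hux : u ≠ x := Finset.ne_of_mem_erase hu
        have hvx : v ≠ x := Finset.ne_of_mem_erase hv
        have c1 := hpaircard u hux
        have c2 : (({x, v} : Finset (Fin (nn + 4 + 1)))ᶜ).card = nn + 3 := by
          rw [Finset.card_compl, hpaircard v hvx, Fintype.card_fin]
          omega
        rw [e] at c2
        rw [c1] at c2
        omega
      rw [Finset.card_union_of_disjoint hdisj,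
        Finset.card_image_of_injOn hinj1, Finset.card_image_of_injOn hinj2,
        Finset.card_erase_of_mem (Finset.mem_univ x), Finset.card_univ, Fintype.card_fin]
      omega
    · intro y hy
      rw [Finset.mem_image] at hy
      obtain ⟨t, ht, rfl⟩ := hy
      rcases Finset.mem_union.1 ht with h1 | h1
      · obtain ⟨u, hu, rfl⟩ := Finset.mem_image.1 h1
        have hux : u ≠ x := Finset.ne_of_mem_erase hu
        left
        exact pair_min hposc hsing (Ne.symm hux) (hstar1 u hux)
      · obtain ⟨u, hu, rfl⟩ := Finset.mem_image.1 h1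
        have hux : u ≠ x := Finset.ne_of_mem_erase hu
        right
        exact copair_max hf hcosing (Ne.symm hux) (hstar2 u hux)
end

section
/- Let f be a positive Boolean function on {0,1}^n, let f_0 = f|_{x_n=0} and f_1 = f|_{x_n=1}. If a point a in {0,1}^{n-1} is a maximal zero of f_0 but the point (a,0) is not a maximal zero of f, then a is a maximal zero of f_1. -/
theorem maximal_zero_of_restriction {n : ℕ} (f : (Fin (n + 1) → Bool) → Bool)
    (hf : Positive f) (a : Fin n → Bool)
    (h0 : MaxZero (fun v : Fin n → Bool => f (Fin.snoc v false)) a)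
    (hnot : ¬ MaxZero f (Fin.snoc a false)) :
    MaxZero (fun v : Fin n → Bool => f (Fin.snoc v true)) a := by
  obtain ⟨ha0, hmax0⟩ := h0
  simp only [MaxZero, not_and, not_forall] at hnot
  obtain ⟨z, hz1, hz2, hz3⟩ := hnot ha0
  rw [Bool.not_eq_true] at hz3
  have hle : a ≤ Fin.init z := by
    intro i
    have := hz1 (Fin.castSucc i)
    simpa [Fin.snoc_castSucc, Fin.init] using this
  -- z (last n) must be true
  have hzlast : z (Fin.last n) = true := by
    by_contra h
    rw [Bool.not_eq_true] at h
    have hzeq : z = Fin.snoc (Fin.init z) false := by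
      rw [← h, Fin.snoc_init_self]
    by_cases hia : Fin.init z = a
    · exact hz2 (by rw [hzeq, hia])
    · have := hmax0 (Fin.init z) hle hia
      simp only at this
      rw [← hzeq] at this
      simp [this] at hz3
  constructor
  · -- f (snoc a true) = false
    by_contra h
    rw [Bool.not_eq_false] at h
    have hle2 : Fin.snoc a true ≤ z := by
      intro i
      refine Fin.lastCases ?_ ?_ i
      · simp [hzlast]
      · intro j
        have := hle j
        simpa [Fin.snoc_castSucc, Fin.init] using this
    have := hf _ _ hle2 h
    simp [this] at hz3
  · intro w hw hwa
    have h1 : f (Fin.snoc w false) = true := hmax0 w hw hwa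
    have hle3 : (Fin.snoc w false : Fin (n+1) → Bool) ≤ Fin.snoc w true := by
      intro i
      refine Fin.lastCases ?_ ?_ i
      · simp
      · intro j; simp
    exact hf _ _ hle3 h1
end

section
/- If f is a Chow function on {0,1}^n, then every restriction of f obtained by fixing some variables to constants is also a Chow function (on the remaining variables). -/
/-- Two Boolean functions on `{0,1}^n` have the same Chow parameters:
the same number of true points, and for each coordinate `i` the same number
of true points with `i`-th coordinate equal to `1`. -/
def SameChowParams {n : ℕ} (f g : (Fin n → Bool) → Bool) : Prop :=
  (Finset.univ.filter (fun x : Fin n → Bool => f x = true)).card =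
    (Finset.univ.filter (fun x : Fin n → Bool => g x = true)).card ∧
  ∀ i : Fin n,
    (Finset.univ.filter (fun x : Fin n → Bool => f x = true ∧ x i = true)).card =
      (Finset.univ.filter (fun x : Fin n → Bool => g x = true ∧ x i = true)).card

/-- A Chow function is uniquely determined by its Chow parameters. -/
def IsChow {n : ℕ} (f : (Fin n → Bool) → Bool) : Prop :=
  ∀ g : (Fin n → Bool) → Bool, SameChowParams f g → g = f

section aux

variable {n k m : ℕ}

/-- Splitting of `{0,1}^n` along the partition `e`. -/
def mergeEquiv (e : Fin k ⊕ Fin m ≃ Fin n) :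
    (Fin n → Bool) ≃ (Fin k → Bool) × (Fin m → Bool) where
  toFun x := (fun j => x (e (Sum.inl j)), fun j => x (e (Sum.inr j)))
  invFun p := fun j => Sum.elim p.1 p.2 (e.symm j)
  left_inv x := by
    funext j
    rcases h : e.symm j with a | b
    · have hj : e (Sum.inl a) = j := by rw [← h, e.apply_symm_apply]
      simp [h, hj]
    · have hj : e (Sum.inr b) = j := by rw [← h, e.apply_symm_apply]
      simp [h, hj]
  right_inv p := by
    cases p
    ext j <;> simp

lemma card_filter_eq_sum (E : (Fin n → Bool) ≃ (Fin k → Bool) × (Fin m → Bool))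
    (P : (Fin n → Bool) → Prop) [DecidablePred P] :
    (Finset.univ.filter P).card
      = ∑ b : Fin k → Bool,
          (Finset.univ.filter (fun a : Fin m → Bool => P (E.symm (b, a)))).card := by
  classical
  rw [← Fintype.card_subtype]
  have e1 : {x // P x} ≃ {p : (Fin k → Bool) × (Fin m → Bool) // P (E.symm p)} :=
    E.subtypeEquiv (by intro x; rw [E.symm_apply_apply])
  have e2 : {p : (Fin k → Bool) × (Fin m → Bool) // P (E.symm p)} ≃
      Σ b : Fin k → Bool, {a : Fin m → Bool // P (E.symm (b, a))} :=
    Equiv.subtypeProdEquivSigmaSubtype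
      (fun (b : Fin k → Bool) (a : Fin m → Bool) => P (E.symm (b, a)))
  rw [Fintype.card_congr (e1.trans e2), Fintype.card_sigma]
  simp [Fintype.card_subtype]

end aux

/-- Any restriction of a Chow function, obtained by fixing the variables indexed by
the left summand (via the partition `e` of the variables) to the constants `c`,
is again a Chow function on the remaining variables. -/
theorem chow_closed_under_restriction {n k m : ℕ} (e : Fin k ⊕ Fin m ≃ Fin n)
    (c : Fin k → Bool) (f : (Fin n → Bool) → Bool) (hf : IsChow f) :
    IsChow (fun a : Fin m → Bool => f (fun j => Sum.elim c a (e.symm j))) := by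
  classical
  intro g hg
  set E := mergeEquiv e with hE
  set Res : (Fin m → Bool) → Bool :=
    fun a => f (fun j => Sum.elim c a (e.symm j)) with hRes
  -- the modified global function
  set F : (Fin n → Bool) → Bool := fun x =>
    if (fun j => x (e (Sum.inl j))) = c then g (fun j => x (e (Sum.inr j))) else f x
    with hFdef
  have hfst : ∀ (b : Fin k → Bool) (a : Fin m → Bool),
      (fun j => (E.symm (b, a)) (e (Sum.inl j))) = b := by
    intro b a
    exact congrArg Prod.fst (E.apply_symm_apply (b, a))
  have hsnd : ∀ (b : Fin k → Bool) (a : Fin m → Bool),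
      (fun j => (E.symm (b, a)) (e (Sum.inr j))) = a := by
    intro b a
    exact congrArg Prod.snd (E.apply_symm_apply (b, a))
  have hFval : ∀ (b : Fin k → Bool) (a : Fin m → Bool),
      F (E.symm (b, a)) = if b = c then g a else f (E.symm (b, a)) := by
    intro b a
    simp only [hFdef, hfst, hsnd]
  have hResval : ∀ a : Fin m → Bool, f (E.symm (c, a)) = Res a := fun a => rfl
  have hcoord : ∀ (b : Fin k → Bool) (a : Fin m → Bool) (i : Fin n),
      (E.symm (b, a)) i = Sum.elim b a (e.symm i) := fun b a i => rfl
  -- F has the same Chow parameters as f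
  have hsame : SameChowParams f F := by
    constructor
    · rw [card_filter_eq_sum E (fun x => f x = true),
        card_filter_eq_sum E (fun x => F x = true)]
      refine Finset.sum_congr rfl fun b _ => ?_
      by_cases hb : b = c
      · obtain rfl := hb.symm
        simp only [hFval, if_pos rfl]
        simp only [hResval]
        exact hg.1
      · simp only [hFval, if_neg hb]
    · intro i
      rw [card_filter_eq_sum E (fun x => f x = true ∧ x i = true),
        card_filter_eq_sum E (fun x => F x = true ∧ x i = true)]
      refine Finset.sum_congr rfl fun b _ => ?_
      by_cases hb : b = c
      · obtain rfl := hb.symm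
        simp only [hFval, if_pos rfl, hcoord]
        rcases h : e.symm i with j | j
        · simp only [h, Sum.elim_inl]
          by_cases hc : c j = true
          · simp only [hc, and_true]
            simp only [hResval]
            exact hg.1
          · simp [hc]
        · simp only [h, Sum.elim_inr]
          simp only [hResval]
          exact hg.2 j
      · simp only [hFval, if_neg hb]
  have hFf : F = f := hf F hsame
  funext a
  have h1 : F (E.symm (c, a)) = g a := by rw [hFval, if_pos rfl]
  rw [hFf] at h1
  rw [hResval] at h1
  exact h1.symm
end

section
/- For n ≥ 3, the function g_n = (x₁∧x₂)∨…∨(x₁∧x_n)∨(x₂∧…∧x_n) has exactly 2n extremal points: the n minimal ones are the points with 1's exactly in coordinates {1,i} for 2 ≤ i ≤ n together with (0,1,1,…,1), and the n maximal zeros are the points with 0's exactly in coordinates {1,i} for 2 ≤ i ≤ n together with (1,0,…,0). -/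
/-- The function `gₙ = x₁x₂ ∨ x₁x₃ ∨ … ∨ x₁xₙ ∨ x₂x₃⋯xₙ` on `n + 3 ≥ 3` variables
(coordinate `0` plays the role of `x₁`). -/
def gfun (n : ℕ) : (Fin (n + 3) → Bool) → Bool := fun x =>
  (x 0 && decide (∃ i : Fin (n + 3), i ≠ 0 ∧ x i = true)) ||
    decide (∀ i : Fin (n + 3), i ≠ 0 → x i = true)

lemma le_iff' {m : ℕ} (z y : Fin m → Bool) : z ≤ y ↔ ∀ j, z j = true → y j = true := by
  constructor
  · intro h j hz
    have := h j
    rw [Bool.le_iff_imp] at this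
    exact this hz
  · intro h j
    rw [Bool.le_iff_imp]
    exact h j

lemma gfun_eq_true {n : ℕ} (x : Fin (n+3) → Bool) : gfun n x = true ↔
    (x 0 = true ∧ ∃ i : Fin (n+3), i ≠ 0 ∧ x i = true) ∨
      (∀ i : Fin (n+3), i ≠ 0 → x i = true) := by
  simp [gfun]

lemma exists_third (n : ℕ) (i : Fin (n+3)) : ∃ j : Fin (n+3), j ≠ 0 ∧ j ≠ i := by
  by_cases h : i = ⟨1, by omega⟩
  · exact ⟨⟨2, by omega⟩, by simp [Fin.ext_iff], by simp [h, Fin.ext_iff]⟩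
  · exact ⟨⟨1, by omega⟩, by simp [Fin.ext_iff], fun hh => h hh.symm⟩

lemma minone_iff (n : ℕ) (y : Fin (n+3) → Bool) : MinOne (gfun n) y ↔
    ((∃ i : Fin (n + 3), i ≠ 0 ∧ y = fun j => decide (j = 0 ∨ j = i)) ∨
      y = fun j => decide (j ≠ 0)) := by
  constructor
  · rintro ⟨hy, hmin⟩
    rw [gfun_eq_true] at hy
    by_cases h0 : y 0 = true
    · -- must have some i ≠ 0 with y i = true
      have hex : ∃ i : Fin (n+3), i ≠ 0 ∧ y i = true := by
        rcases hy with ⟨_, h⟩ | h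
        · exact h
        · exact ⟨⟨1, by omega⟩, by simp [Fin.ext_iff], h _ (by simp [Fin.ext_iff])⟩
      obtain ⟨i, hi0, hyi⟩ := hex
      left
      refine ⟨i, hi0, ?_⟩
      set z : Fin (n+3) → Bool := fun j => decide (j = 0 ∨ j = i) with hz
      have hzle : z ≤ y := by
        rw [le_iff']
        intro j hj
        simp only [hz, decide_eq_true_iff] at hj
        rcases hj with rfl | rfl
        · exact h0
        · exact hyi
      have hzt : gfun n z = true := by
        rw [gfun_eq_true]
        left
        exact ⟨by simp [hz], i, hi0, by simp [hz]⟩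
      by_contra hne
      have := hmin z hzle (fun h => hne h.symm)
      rw [this] at hzt; exact absurd hzt (by simp)
    · -- y 0 = false, so second disjunct holds
      right
      have hall : ∀ i : Fin (n+3), i ≠ 0 → y i = true := by
        rcases hy with ⟨h, _⟩ | h
        · exact absurd h h0
        · exact h
      funext j
      by_cases hj : j = 0
      · subst hj
        have : y 0 = false := by revert h0; cases y 0 <;> simp
        simp [this]
      · simp [hj, hall j hj]
  · rintro (⟨i, hi0, rfl⟩ | rfl)
    · constructor
      · rw [gfun_eq_true]; left; exact ⟨by simp, i, hi0, by simp⟩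
      · intro z hzle hzne
        rw [le_iff'] at hzle
        -- z j = false for j ∉ {0, i}
        have hzero : ∀ j : Fin (n+3), j ≠ 0 → j ≠ i → z j = false := by
          intro j hj0 hji
          by_contra h
          have := hzle j (by simpa using h)
          simp [hj0, hji] at this
        obtain ⟨k, hk0, hki⟩ := exists_third n i
        rw [Bool.eq_false_iff, Ne, gfun_eq_true]
        rintro (⟨h0, j, hj0, hj⟩ | h)
        · have hji : j = i := by
            by_contra hji
            exact absurd hj (by simp [hzero j hj0 hji])
          subst hji
          apply hzne
          funext l
          by_cases hl0 : l = 0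
          · subst hl0; simp [h0]
          · by_cases hli : l = j
            · simp [hli, hj]
            · simp [hl0, hli, hzero l hl0 hli]
        · have := h k hk0
          rw [hzero k hk0 hki] at this
          simp at this
    · constructor
      · rw [gfun_eq_true]; right; intro i hi; simp [hi]
      · intro z hzle hzne
        rw [le_iff'] at hzle
        have h0 : z 0 = false := by
          by_contra h
          have := hzle 0 (by simpa using h)
          simp at this
        have hex : ∃ i : Fin (n+3), i ≠ 0 ∧ z i = false := by
          by_contra h
          push_neg at h
          apply hzne
          funext l
          by_cases hl : l = 0
          · subst hl; simp [h0]
          · simp [hl]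
            have := h l hl
            simpa using this
        obtain ⟨i, hi0, hzi⟩ := hex
        rw [Bool.eq_false_iff, Ne, gfun_eq_true]
        rintro (⟨h, -⟩ | h)
        · rw [h0] at h; simp at h
        · have := h i hi0; rw [hzi] at this; simp at this

lemma gfun_eq_false {n : ℕ} (x : Fin (n+3) → Bool) : gfun n x = false ↔
    ¬ ((x 0 = true ∧ ∃ i : Fin (n+3), i ≠ 0 ∧ x i = true) ∨
      (∀ i : Fin (n+3), i ≠ 0 → x i = true)) := by
  rw [Bool.eq_false_iff, Ne, gfun_eq_true]

lemma maxzero_iff (n : ℕ) (y : Fin (n+3) → Bool) : MaxZero (gfun n) y ↔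
    ((∃ i : Fin (n + 3), i ≠ 0 ∧ y = fun j => decide (j ≠ 0 ∧ j ≠ i)) ∨
      y = fun j => decide (j = 0)) := by
  constructor
  · rintro ⟨hy, hmax⟩
    rw [gfun_eq_false] at hy
    push_neg at hy
    obtain ⟨h1, i, hi0, hyi⟩ := hy
    have hyi : y i = false := by revert hyi; cases y i <;> simp
    by_cases h0 : y 0 = true
    · right
      have hall : ∀ j : Fin (n+3), j ≠ 0 → y j = false := by
        intro j hj
        have := h1 h0 j hj
        revert this; cases y j <;> simp
      funext l
      by_cases hl : l = 0
      · subst hl; simp [h0]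
      · simp [hl, hall l hl]
    · left
      refine ⟨i, hi0, ?_⟩
      have h0' : y 0 = false := by revert h0; cases y 0 <;> simp
      set z : Fin (n+3) → Bool := fun j => decide (j ≠ 0 ∧ j ≠ i) with hz
      have hle : y ≤ z := by
        rw [le_iff']
        intro j hj
        have hj0 : j ≠ 0 := by rintro rfl; rw [h0'] at hj; simp at hj
        have hji : j ≠ i := by rintro rfl; rw [hyi] at hj; simp at hj
        simp [hz, hj0, hji]
      have hzf : gfun n z = false := by
        rw [gfun_eq_false]
        rintro (⟨hz0, -⟩ | h)
        · simp [hz] at hz0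
        · have := h i hi0; simp [hz] at this
      by_contra hne
      have := hmax z hle (fun h => hne h.symm)
      rw [this] at hzf; exact absurd hzf (by simp)
  · rintro (⟨i, hi0, rfl⟩ | rfl)
    · constructor
      · rw [gfun_eq_false]
        rintro (⟨h0, -⟩ | h)
        · simp at h0
        · have := h i hi0; simp at this
      · intro z hle hne
        rw [le_iff'] at hle
        have hones : ∀ j : Fin (n+3), j ≠ 0 → j ≠ i → z j = true := by
          intro j hj0 hji
          exact hle j (by simp [hj0, hji])
        obtain ⟨k, hk0, hki⟩ := exists_third n i
        rw [gfun_eq_true]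
        by_cases hz0 : z 0 = true
        · exact Or.inl ⟨hz0, k, hk0, hones k hk0 hki⟩
        · right
          have hz0' : z 0 = false := by revert hz0; cases z 0 <;> simp
          have hzi : z i = true := by
            by_contra h
            apply hne
            have hzi' : z i = false := by revert h; cases z i <;> simp
            funext l
            by_cases hl0 : l = 0
            · subst hl0; simp [hz0']
            · by_cases hli : l = i
              · subst hli; simp [hzi']
              · simp [hl0, hli, hones l hl0 hli]
          intro j hj0
          by_cases hji : j = i
          · subst hji; exact hzi
          · exact hones j hj0 hji
    · constructor
      · rw [gfun_eq_false]
        rintro (⟨-, j, hj0, hj⟩ | h)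
        · simp [hj0] at hj
        · have := h ⟨1, by omega⟩ (by simp [Fin.ext_iff])
          simp [Fin.ext_iff] at this
      · intro z hle hne
        rw [le_iff'] at hle
        have hz0 : z 0 = true := hle 0 (by simp)
        have hex : ∃ j : Fin (n+3), j ≠ 0 ∧ z j = true := by
          by_contra h
          push_neg at h
          apply hne
          funext l
          by_cases hl : l = 0
          · subst hl; simp [hz0]
          · have : z l = false := by
              have := h l hl; revert this; cases z l <;> simp
            simp [hl, this]
        obtain ⟨j, hj0, hj⟩ := hex
        rw [gfun_eq_true]
        exact Or.inl ⟨hz0, j, hj0, hj⟩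

def F (n : ℕ) : Fin (n+3) × Bool → (Fin (n+3) → Bool)
  | (i, true) => if i = 0 then (fun j => decide (j ≠ 0)) else (fun j => decide (j = 0 ∨ j = i))
  | (i, false) => if i = 0 then (fun j => decide (j = 0)) else (fun j => decide (j ≠ 0 ∧ j ≠ i))

lemma F_inj (n : ℕ) : Function.Injective (F n) := by
  rintro ⟨i, b⟩ ⟨i', b'⟩ h
  rcases b <;> rcases b' <;> simp only [F] at h
  · by_cases hi : i = 0 <;> by_cases hi' : i' = 0
    · simp [hi, hi']
    · rw [if_pos hi, if_neg hi'] at h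
      have := congrFun h 0; simp at this
    · rw [if_neg hi, if_pos hi'] at h
      have := congrFun h 0; simp at this
    · rw [if_neg hi, if_neg hi'] at h
      have := congrFun h i; simp [hi] at this
      simp [this]
  · by_cases hi : i = 0 <;> by_cases hi' : i' = 0
    · rw [if_pos hi, if_pos hi'] at h
      have := congrFun h ⟨1, by omega⟩; simp [Fin.ext_iff] at this
    · rw [if_pos hi, if_neg hi'] at h
      have := congrFun h i'; simp [hi'] at this
    · rw [if_neg hi, if_pos hi'] at h
      have := congrFun h i; simp [hi] at this
    · rw [if_neg hi, if_neg hi'] at h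
      have := congrFun h 0; simp at this
  · by_cases hi : i = 0 <;> by_cases hi' : i' = 0
    · rw [if_pos hi, if_pos hi'] at h
      have := congrFun h ⟨1, by omega⟩; simp [Fin.ext_iff] at this
    · rw [if_pos hi, if_neg hi'] at h
      have := congrFun h i'; simp [hi'] at this
    · rw [if_neg hi, if_pos hi'] at h
      have := congrFun h i; simp [hi] at this
    · rw [if_neg hi, if_neg hi'] at h
      have := congrFun h 0; simp at this
  · by_cases hi : i = 0 <;> by_cases hi' : i' = 0
    · simp [hi, hi']
    · rw [if_pos hi, if_neg hi'] at h
      have := congrFun h 0; simp at this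
    · rw [if_neg hi, if_pos hi'] at h
      have := congrFun h 0; simp at this
    · rw [if_neg hi, if_neg hi'] at h
      have := congrFun h i; simp [hi] at this
      simp [this]

lemma range_F (n : ℕ) :
    {y : Fin (n + 3) → Bool | MinOne (gfun n) y ∨ MaxZero (gfun n) y} = Set.range (F n) := by
  ext y
  simp only [Set.mem_setOf_eq, Set.mem_range, minone_iff, maxzero_iff]
  constructor
  · rintro ((⟨i, hi0, rfl⟩ | rfl) | (⟨i, hi0, rfl⟩ | rfl))
    · exact ⟨(i, true), by simp [F, hi0]⟩
    · exact ⟨(0, true), by simp [F]⟩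
    · exact ⟨(i, false), by simp [F, hi0]⟩
    · exact ⟨(0, false), by simp [F]⟩
  · rintro ⟨⟨i, b⟩, rfl⟩
    rcases b
    · by_cases hi : i = 0
      · right; right; simp [F, hi]
      · right; left; exact ⟨i, hi, by simp [F, hi]⟩
    · by_cases hi : i = 0
      · left; right; simp [F, hi]
      · left; left; exact ⟨i, hi, by simp [F, hi]⟩

lemma card_eq (n : ℕ) :
    {y : Fin (n + 3) → Bool | MinOne (gfun n) y ∨ MaxZero (gfun n) y}.ncard = 2 * (n + 3) := by
  rw [range_F, ← Set.image_univ, Set.ncard_image_of_injective _ (F_inj n), Set.ncard_univ]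
  simp [Nat.card_eq_fintype_card]
  ring

theorem g_extremal_points (n : ℕ) :
    (∀ y : Fin (n + 3) → Bool, MinOne (gfun n) y ↔
      ((∃ i : Fin (n + 3), i ≠ 0 ∧ y = fun j => decide (j = 0 ∨ j = i)) ∨
        y = fun j => decide (j ≠ 0))) ∧
    (∀ y : Fin (n + 3) → Bool, MaxZero (gfun n) y ↔
      ((∃ i : Fin (n + 3), i ≠ 0 ∧ y = fun j => decide (j ≠ 0 ∧ j ≠ i)) ∨
        y = fun j => decide (j = 0))) ∧
    {y : Fin (n + 3) → Bool | MinOne (gfun n) y ∨ MaxZero (gfun n) y}.ncard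
      = 2 * (n + 3) := by
  exact ⟨minone_iff n, maxzero_iff n, card_eq n⟩
end

section
/- For n ≥ 4, the function f_n(x₁,…,x_n) = (x₁∧x₂)∨(x₁∧x₃)∨…∨(x₁∧x_{n−1})∨(x₂∧x₃∧…∧x_n) is a threshold function, represented by: f_n(x)=0 if and only if (2n−5)x₁ + 2(x₂+…+x_{n−1}) + x_n ≤ 2n−4. -/
/-- The real value of a Boolean coordinate. -/
def bval (b : Bool) : ℝ := if b then 1 else 0

/-- `f` is 2-summable: there are two false points and two true points
(repetitions allowed) with equal vector sums in `ℝ^n`. -/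
def TwoSummable {n : ℕ} (f : (Fin n → Bool) → Bool) : Prop :=
  ∃ x₁ x₂ y₁ y₂ : Fin n → Bool,
    f x₁ = false ∧ f x₂ = false ∧ f y₁ = true ∧ f y₂ = true ∧
    ∀ i : Fin n, bval (x₁ i) + bval (x₂ i) = bval (y₁ i) + bval (y₂ i)

/-- `f` is a threshold function: for some real weights `w` and threshold `t`,
`f x = 0` iff `∑ wᵢ xᵢ ≤ t`. -/
def IsThreshold {n : ℕ} (f : (Fin n → Bool) → Bool) : Prop :=
  ∃ (w : Fin n → ℝ) (t : ℝ), ∀ x : Fin n → Bool,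
    f x = false ↔ ∑ i, w i * bval (x i) ≤ t

/-- The function `fₙ = x₁x₂ ∨ x₁x₃ ∨ … ∨ x₁x_{n−1} ∨ x₂x₃⋯xₙ` on `n + 4 ≥ 4`
variables (coordinate `0` plays the role of `x₁`, the last coordinate of `xₙ`). -/
def ffun (n : ℕ) : (Fin (n + 4) → Bool) → Bool := fun x =>
  (x 0 && decide (∃ i : Fin (n + 4), i ≠ 0 ∧ i ≠ Fin.last (n + 3) ∧ x i = true)) ||
    decide (∀ i : Fin (n + 4), i ≠ 0 → x i = true)

/-- The weighted sum `(2n−5)x₁ + 2(x₂ + ⋯ + x_{n−1}) + xₙ` (with `n + 4` playing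
the role of `n`). -/
noncomputable def fsum (n : ℕ) (x : Fin (n + 4) → Bool) : ℝ :=
  (2 * ((n : ℝ) + 4) - 5) * bval (x 0) +
    2 * ∑ i ∈ Finset.univ.filter
        (fun i : Fin (n + 4) => i ≠ 0 ∧ i ≠ Fin.last (n + 3)), bval (x i) +
    bval (x (Fin.last (n + 3)))

lemma key_iff (n : ℕ) (x : Fin (n + 4) → Bool) :
    ffun n x = false ↔ fsum n x ≤ 2 * ((n : ℝ) + 4) - 4 := by
  classical
  have hlast0 : (Fin.last (n+3) : Fin (n+4)) ≠ 0 := by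
    simp [Fin.ext_iff, Fin.last]
  set M : Finset (Fin (n+4)) :=
    Finset.univ.filter (fun i => i ≠ 0 ∧ i ≠ Fin.last (n+3)) with hMdef
  have hMeq : M = Finset.univ \ {0, Fin.last (n+3)} := by
    ext i; simp [hMdef]
  have hM : M.card = n + 2 := by
    rw [hMeq, Finset.card_sdiff_of_subset (by simp)]
    rw [Finset.card_insert_of_notMem (by simp [hlast0.symm])]
    simp
  set k := (M.filter (fun i => x i = true)).card with hk
  have hsum : ∑ i ∈ M, bval (x i) = (k : ℝ) := by
    rw [hk]
    simp only [bval]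
    rw [Finset.sum_boole]
  have hkle : k ≤ n + 2 := hM ▸ Finset.card_filter_le _ _
  have hex : (∃ i : Fin (n+4), i ≠ 0 ∧ i ≠ Fin.last (n+3) ∧ x i = true) ↔ 0 < k := by
    rw [hk, Finset.card_pos]
    constructor
    · rintro ⟨i, h1, h2, h3⟩; exact ⟨i, by simp [hMdef, h1, h2, h3]⟩
    · rintro ⟨i, hi⟩
      simp only [hMdef, Finset.mem_filter, Finset.mem_univ, true_and] at hi
      exact ⟨i, hi.1.1, hi.1.2, hi.2⟩
  have hall : (∀ i : Fin (n+4), i ≠ 0 → x i = true) ↔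
      (k = n + 2 ∧ x (Fin.last (n+3)) = true) := by
    constructor
    · intro h
      refine ⟨?_, h _ hlast0⟩
      rw [hk, Finset.filter_true_of_mem, hM]
      intro i hi
      simp only [hMdef, Finset.mem_filter, Finset.mem_univ, true_and] at hi
      exact h i hi.1
    · rintro ⟨hkcard, hxl⟩
      have hfe : M.filter (fun i => x i = true) = M :=
        Finset.eq_of_subset_of_card_le (Finset.filter_subset _ _)
          (by rw [← hk, hkcard, hM])
      intro i hi
      by_cases hil : i = Fin.last (n+3)
      · rw [hil]; exact hxl
      · have : i ∈ M := by simp [hMdef, hi, hil]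
        rw [← hfe] at this
        exact (Finset.mem_filter.mp this).2
  have hkR : (0:ℝ) ≤ (k:ℝ) := Nat.cast_nonneg k
  have hkR2 : (k:ℝ) ≤ (n:ℝ) + 2 := by exact_mod_cast hkle
  have hfs : fsum n x = (2 * ((n : ℝ) + 4) - 5) * bval (x 0) + 2 * (k : ℝ) +
      bval (x (Fin.last (n + 3))) := by
    unfold fsum; rw [← hsum, hMdef]
  simp only [ffun, hfs, Bool.or_eq_false_iff, Bool.and_eq_false_iff,
    decide_eq_false_iff_not, hsum, hex, hall]
  rcases hx0 : x 0 with _ | _ <;> rcases hxl : x (Fin.last (n+3)) with _ | _ <;>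
    simp [bval, hx0, hxl]
  · linarith
  · constructor
    · intro h
      have hle : k ≤ n + 1 := by omega
      have : (k:ℝ) ≤ (n:ℝ) + 1 := by exact_mod_cast hle
      linarith
    · intro h hkn
      rw [hkn] at h
      push_cast at h
      linarith
  · constructor
    · intro h
      rw [h]
      push_cast
      linarith
    · intro h
      have h1 : (k:ℝ) < 1 := by linarith
      have : k < 1 := by exact_mod_cast h1
      omega
  · constructor
    · rintro ⟨h, -⟩
      rw [h]
      push_cast
      linarith
    · intro h
      have h1 : (k:ℝ) ≤ 0 := by linarith
      have h0 : k ≤ 0 := by exact_mod_cast h1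
      omega

lemma sum_w (n : ℕ) (x : Fin (n + 4) → Bool) :
    ∑ i, (if i = 0 then 2 * ((n : ℝ) + 4) - 5
        else if i = Fin.last (n + 3) then (1:ℝ) else 2) * bval (x i) = fsum n x := by
  classical
  have hlast0 : (Fin.last (n+3) : Fin (n+4)) ≠ 0 := by
    simp [Fin.ext_iff, Fin.last]
  rw [← Finset.sum_filter_add_sum_filter_not Finset.univ
    (fun i : Fin (n+4) => i ≠ 0 ∧ i ≠ Fin.last (n+3))]
  have h1 : ∑ i ∈ Finset.univ.filter
      (fun i : Fin (n+4) => i ≠ 0 ∧ i ≠ Fin.last (n+3)),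
      (if i = 0 then 2 * ((n : ℝ) + 4) - 5
        else if i = Fin.last (n + 3) then (1:ℝ) else 2) * bval (x i)
      = 2 * ∑ i ∈ Finset.univ.filter
      (fun i : Fin (n+4) => i ≠ 0 ∧ i ≠ Fin.last (n+3)), bval (x i) := by
    rw [Finset.mul_sum]
    refine Finset.sum_congr rfl ?_
    intro i hi
    simp only [Finset.mem_filter, Finset.mem_univ, true_and] at hi
    simp [hi.1, hi.2]
  have h2 : Finset.univ.filter
      (fun i : Fin (n+4) => ¬(i ≠ 0 ∧ i ≠ Fin.last (n+3))) = {0, Fin.last (n+3)} := by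
    ext i; simp; tauto
  rw [h1, h2, Finset.sum_pair (Ne.symm hlast0)]
  rw [if_pos rfl, if_neg hlast0, if_pos rfl]
  simp only [fsum]
  ring

theorem f_is_threshold (n : ℕ) :
    IsThreshold (ffun n) ∧
    ∀ x : Fin (n + 4) → Bool,
      ffun n x = false ↔ fsum n x ≤ 2 * ((n : ℝ) + 4) - 4 := by
  refine ⟨⟨fun i => if i = 0 then 2 * ((n : ℝ) + 4) - 5
      else if i = Fin.last (n + 3) then (1:ℝ) else 2,
      2 * ((n : ℝ) + 4) - 4, fun x => ?_⟩, fun x => key_iff n x⟩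
  rw [sum_w]
  exact key_iff n x
end

section
/- For n ≥ 4 and f_n = (x₁∧x₂)∨…∨(x₁∧x_{n−1})∨(x₂∧…∧x_n), each of the n−2 maximal zeros y_i (having 0 exactly in coordinates 1 and i+1, for 1 ≤ i ≤ n−2) is not essential for f_n among threshold functions: any Boolean function g agreeing with f_n everywhere except at y_i, with g(y_i)=1, is 2-summable and hence not threshold. Specifically, with x_i the minimal one having 1's exactly in coordinates 1 and i+1, z₁ = (0,1,…,1,0), z₂ = (1,0,…,0,1), one has x_i + y_i = z₁ + z₂, g(y_i)=g(x_i)=1 while g(z₁)=g(z₂)=0. -/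
lemma fin_one_ne_zero (n : ℕ) : (1 : Fin (n + 4)) ≠ 0 := by
  simp [Fin.ext_iff]
lemma fin_one_ne_last (n : ℕ) : (1 : Fin (n + 4)) ≠ Fin.last (n + 3) := by
  simp [Fin.ext_iff, Fin.last]
lemma fin_two_ne_zero (n : ℕ) : (2 : Fin (n + 4)) ≠ 0 := by
  simp [Fin.ext_iff, Nat.mod_eq_of_lt (show 2 < n + 4 by omega)]
lemma fin_two_ne_last (n : ℕ) : (2 : Fin (n + 4)) ≠ Fin.last (n + 3) := by
  simp [Fin.ext_iff, Fin.last, Nat.mod_eq_of_lt (show 2 < n + 4 by omega)]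

lemma ffun_false_at (n : ℕ) (j : Fin (n + 4)) (hj0 : j ≠ 0) :
    ffun n (fun t => decide (t ≠ 0 ∧ t ≠ j)) = false := by
  simp only [ffun, Bool.or_eq_false_iff, Bool.and_eq_false_iff, decide_eq_false_iff_not,
    decide_eq_true_eq, not_exists, not_forall]
  constructor
  · left; simp
  · exact ⟨j, hj0, by simp⟩

lemma ffun_z2_false (n : ℕ) :
    ffun n (fun t => decide (t = 0 ∨ t = Fin.last (n + 3))) = false := by
  simp only [ffun, Bool.or_eq_false_iff, Bool.and_eq_false_iff, decide_eq_false_iff_not,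
    decide_eq_true_eq, not_exists, not_forall]
  constructor
  · right
    intro i
    rintro ⟨h0, hl, h⟩
    rcases h with h | h <;> [exact h0 h; exact hl h]
  · refine ⟨1, fin_one_ne_zero n, ?_⟩
    rintro (h | h) <;> [exact fin_one_ne_zero n h; exact fin_one_ne_last n h]

lemma ffun_x_true (n : ℕ) (j : Fin (n + 4)) (hj0 : j ≠ 0) (hjl : j ≠ Fin.last (n + 3)) :
    ffun n (fun t => decide (t = 0 ∨ t = j)) = true := by
  simp only [ffun, Bool.or_eq_true, Bool.and_eq_true, decide_eq_true_eq]
  left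
  exact ⟨by simp, j, hj0, hjl, by simp⟩

lemma twoSummable_not_threshold {m : ℕ} {f : (Fin m → Bool) → Bool}
    (h : TwoSummable f) : ¬ IsThreshold f := by
  rintro ⟨w, t, hw⟩
  obtain ⟨x₁, x₂, y₁, y₂, hx₁, hx₂, hy₁, hy₂, hsum⟩ := h
  have h1 := (hw x₁).mp hx₁
  have h2 := (hw x₂).mp hx₂
  have h3 : ¬ (∑ i, w i * bval (y₁ i) ≤ t) := fun h => by
    have := (hw y₁).mpr h; simp [hy₁] at this
  have h4 : ¬ (∑ i, w i * bval (y₂ i) ≤ t) := fun h => by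
    have := (hw y₂).mpr h; simp [hy₂] at this
  push_neg at h3 h4
  have key : (∑ i, w i * bval (x₁ i)) + (∑ i, w i * bval (x₂ i)) =
      (∑ i, w i * bval (y₁ i)) + (∑ i, w i * bval (y₂ i)) := by
    rw [← Finset.sum_add_distrib, ← Finset.sum_add_distrib]
    apply Finset.sum_congr rfl
    intro i _
    rw [← mul_add, ← mul_add, hsum i]
  linarith

lemma bool_true_le {a : Bool} (h : true ≤ a) : a = true := by
  cases a
  · exact absurd h (by decide)
  · rfl

theorem f_maximal_zeros_not_essential (n : ℕ) (j : Fin (n + 4))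
    (hj0 : j ≠ 0) (hjl : j ≠ Fin.last (n + 3)) :
    MaxZero (ffun n) (fun t => decide (t ≠ 0 ∧ t ≠ j)) ∧
    ∀ g : (Fin (n + 4) → Bool) → Bool,
      g (fun t => decide (t ≠ 0 ∧ t ≠ j)) = true →
      (∀ v : Fin (n + 4) → Bool,
        v ≠ (fun t => decide (t ≠ 0 ∧ t ≠ j)) → g v = ffun n v) →
      (∀ t : Fin (n + 4),
        bval (decide (t = 0 ∨ t = j)) + bval (decide (t ≠ 0 ∧ t ≠ j)) =
          bval (decide (t ≠ 0 ∧ t ≠ Fin.last (n + 3))) +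
            bval (decide (t = 0 ∨ t = Fin.last (n + 3)))) ∧
      g (fun t => decide (t = 0 ∨ t = j)) = true ∧
      g (fun t => decide (t ≠ 0 ∧ t ≠ Fin.last (n + 3))) = false ∧
      g (fun t => decide (t = 0 ∨ t = Fin.last (n + 3))) = false ∧
      TwoSummable g ∧ ¬ IsThreshold g := by
  have hl0 : Fin.last (n + 3) ≠ (0 : Fin (n + 4)) := by
    simp [Fin.ext_iff, Fin.last]
  constructor
  · refine ⟨ffun_false_at n j hj0, ?_⟩
    intro z hle hne
    have hz : ∀ t : Fin (n + 4), t ≠ 0 → t ≠ j → z t = true := by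
      intro t h0 hj
      have h := hle t
      simp only [decide_eq_true_eq, h0, hj, ne_eq, not_false_iff, and_self, decide_true] at h
      exact bool_true_le h
    by_cases hz0 : z 0 = true
    · -- first disjunct with a fourth index
      set i : Fin (n + 4) := if j = 1 then 2 else 1 with hi
      have hi0 : i ≠ 0 := by
        rw [hi]; split <;> [exact fin_two_ne_zero n; exact fin_one_ne_zero n]
      have hil : i ≠ Fin.last (n + 3) := by
        rw [hi]; split <;> [exact fin_two_ne_last n; exact fin_one_ne_last n]
      have hij : i ≠ j := by
        rw [hi]; split
        · rename_i h; rw [h]; intro hc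
          exact fin_one_ne_zero n (by simpa [Fin.ext_iff, Nat.mod_eq_of_lt (show 2 < n + 4 by omega)] using hc.symm)
        · rename_i h; exact fun hc => h hc.symm
      simp only [ffun, Bool.or_eq_true, Bool.and_eq_true, decide_eq_true_eq]
      left
      exact ⟨hz0, i, hi0, hil, hz i hi0 hij⟩
    · -- z 0 = false, so z j = true and all coords except 0 are true
      have hz0' : z 0 = false := by cases h : z 0 <;> simp_all
      have hzj : z j = true := by
        by_contra hzj
        apply hne
        funext t
        by_cases h0 : t = 0
        · subst h0; simp [hz0']
        · by_cases hjt : t = j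
          · subst hjt; simp [hj0, hzj]
          · simp [h0, hjt, hz t h0 hjt]
      simp only [ffun, Bool.or_eq_true, Bool.and_eq_true, decide_eq_true_eq]
      right
      intro t h0
      by_cases hjt : t = j
      · subst hjt; exact hzj
      · exact hz t h0 hjt
  · intro g hgy hgoth
    have hsum : ∀ t : Fin (n + 4),
        bval (decide (t = 0 ∨ t = j)) + bval (decide (t ≠ 0 ∧ t ≠ j)) =
          bval (decide (t ≠ 0 ∧ t ≠ Fin.last (n + 3))) +
            bval (decide (t = 0 ∨ t = Fin.last (n + 3))) := by
      intro t
      by_cases h0 : t = 0 <;> by_cases hjt : t = j <;>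
        by_cases hlt : t = Fin.last (n + 3) <;> simp_all [bval]
    have hgx : g (fun t => decide (t = 0 ∨ t = j)) = true := by
      rw [hgoth _ (by
        intro hc
        have := congrFun hc 0
        simp [hj0.symm] at this)]
      exact ffun_x_true n j hj0 hjl
    have hgz1 : g (fun t => decide (t ≠ 0 ∧ t ≠ Fin.last (n + 3))) = false := by
      rw [hgoth _ (by
        intro hc
        have := congrFun hc j
        simp [hj0, hjl] at this)]
      exact ffun_false_at n (Fin.last (n + 3)) hl0
    have hgz2 : g (fun t => decide (t = 0 ∨ t = Fin.last (n + 3))) = false := by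
      rw [hgoth _ (by
        intro hc
        have := congrFun hc 0
        simp at this)]
      exact ffun_z2_false n
    refine ⟨hsum, hgx, hgz1, hgz2, ?_, ?_⟩
    · exact ⟨_, _, _, _, hgz1, hgz2, hgx, hgy, fun t => (hsum t).symm⟩
    · exact twoSummable_not_threshold
        ⟨_, _, _, _, hgz1, hgz2, hgx, hgy, fun t => (hsum t).symm⟩
end
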